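/- arXiv:1503.02375 — 3 statements merged into one kernel-verified Lean document; each statement's English description precedes it below -/
import Mathlib

section
/- Let T = ℕ, let X be a process on Ω with values in a measurable space (E, ℰ), and let S be a stopping time of the natural filtration F^X. Then F^X_S ⊆ σ(X^S), where X^S is viewed as a map from Ω into (E^ℕ, ℰ^{⊗ℕ}). In fact σ(X^S) = F^X_S. -/
open MeasureTheory Set
set_option linter.unusedSectionVars false

variable {Ω E : Type*}

/-- The natural filtration of a discrete-time process `X : ℕ → Ω → E`. -/
def natFilt [mE : MeasurableSpace E] (X : ℕ → Ω → E) (n : ℕ) : MeasurableSpace Ω :=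
  ⨆ m, ⨆ _ : m ≤ n, mE.comap (X m)

/-- The process `X` stopped at the random time `S : Ω → ℕ ∪ {∞}`. -/
def stopped (X : ℕ → Ω → E) (S : Ω → ℕ∞) (n : ℕ) (ω : Ω) : E :=
  X (min n (WithTop.untopD n (S ω))) ω

namespace StmtAux

def tr (n : ℕ) (x : ℕ → E) (m : ℕ) : E := x (min m n)

variable [mE : MeasurableSpace E]

lemma measurable_tr (n : ℕ) : Measurable (tr (E := E) n) :=
  measurable_pi_lambda _ fun m => measurable_pi_apply (min m n)

lemma tr_eq_of_agree {n : ℕ} {x y : ℕ → E} (h : ∀ m, m ≤ n → x m = y m) : tr n x = tr n y :=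
  funext fun m => h _ (min_le_right m n)

variable (X : ℕ → Ω → E)

lemma natFilt_mono {k m : ℕ} (h : k ≤ m) : natFilt X k ≤ natFilt X m :=
  iSup_le fun i => iSup_le fun hi =>
    le_iSup₂ (f := fun i (_ : i ≤ m) => mE.comap (X i)) i (hi.trans h)

lemma natFilt_eq (n : ℕ) :
    natFilt X n = MeasurableSpace.comap (fun ω => tr n (fun m => X m ω)) MeasurableSpace.pi := by
  have h1 : MeasurableSpace.comap (fun ω => tr n (fun m => X m ω)) MeasurableSpace.pi
      = ⨆ m : ℕ, mE.comap (X (min m n)) := by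
    rw [show (MeasurableSpace.pi : MeasurableSpace (ℕ → E))
        = ⨆ m : ℕ, mE.comap (fun x => x m) from rfl, MeasurableSpace.comap_iSup]
    refine iSup_congr fun m => ?_
    rw [MeasurableSpace.comap_comp]; rfl
  rw [h1, natFilt]
  refine le_antisymm (iSup_le fun m => iSup_le fun hm => ?_) (iSup_le fun m => ?_)
  · have h2 : X m = X (min m n) := by rw [min_eq_left hm]
    rw [h2]
    exact le_iSup (fun m => mE.comap (X (min m n))) m
  · exact le_iSup₂ (f := fun i (_ : i ≤ n) => mE.comap (X i)) (min m n) (min_le_right m n)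

lemma iSup_natFilt :
    (⨆ n, natFilt X n) = MeasurableSpace.comap (fun ω (m : ℕ) => X m ω) MeasurableSpace.pi := by
  have h1 : MeasurableSpace.comap (fun ω (m : ℕ) => X m ω) MeasurableSpace.pi
      = ⨆ m : ℕ, mE.comap (X m) := by
    rw [show (MeasurableSpace.pi : MeasurableSpace (ℕ → E))
        = ⨆ m : ℕ, mE.comap (fun x => x m) from rfl, MeasurableSpace.comap_iSup]
    refine iSup_congr fun m => ?_
    rw [MeasurableSpace.comap_comp]; rfl
  rw [h1]
  refine le_antisymm
    (iSup_le fun n => iSup_le fun m => iSup_le fun _ => le_iSup (fun m => mE.comap (X m)) m)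
    (iSup_le fun m => le_iSup_of_le m
      (le_iSup₂ (f := fun i (_ : i ≤ m) => mE.comap (X i)) m le_rfl))

lemma exists_invariant (n : ℕ) {A : Set Ω} (hA : MeasurableSet[natFilt X n] A) :
    ∃ C : Set (ℕ → E), MeasurableSet C ∧
      (∀ x y : ℕ → E, (∀ m, m ≤ n → x m = y m) → (x ∈ C ↔ y ∈ C)) ∧
      (fun ω (m : ℕ) => X m ω) ⁻¹' C = A := by
  rw [natFilt_eq, MeasurableSpace.measurableSet_comap] at hA
  obtain ⟨B, hB, hBA⟩ := hA
  refine ⟨tr n ⁻¹' B, measurable_tr n hB, fun x y hxy => by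
    rw [mem_preimage, mem_preimage, tr_eq_of_agree hxy], ?_⟩
  exact hBA

variable (S : Ω → ℕ∞)

lemma pathS_eq_coe {ω : Ω} {k : ℕ} (h : S ω = (k : ℕ∞)) :
    (fun n => stopped X S n ω) = tr k (fun m => X m ω) := by
  funext n; simp only [stopped, tr, h]; rfl

lemma pathS_eq_top {ω : Ω} (h : S ω = ⊤) :
    (fun n => stopped X S n ω) = fun m => X m ω := by
  funext n; simp only [stopped, h]; show X (min n n) ω = X n ω; rw [min_self]

end StmtAux

open StmtAux in
/-- In discrete time, for a stopping time `S` of the natural filtration of `X`,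
the σ-field `F^X_S` coincides with the σ-field generated by the stopped process `X^S`
(the latter viewed as a map into `E^ℕ` with the product σ-algebra). -/
theorem stmt_2 [MeasurableSpace E] (X : ℕ → Ω → E) (S : Ω → ℕ∞)
    (hS : ∀ n : ℕ, MeasurableSet[natFilt X n] {ω | S ω ≤ (n : ℕ∞)}) :
    ∀ A : Set Ω,
      (MeasurableSet[⨆ n, natFilt X n] A ∧
          ∀ n : ℕ, MeasurableSet[natFilt X n] (A ∩ {ω | S ω ≤ (n : ℕ∞)})) ↔
        MeasurableSet[MeasurableSpace.comap (fun ω (n : ℕ) => stopped X S n ω)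
          MeasurableSpace.pi] A := by
  have hagree : ∀ (j : ℕ) (p : ℕ → E) (m : ℕ), m ≤ j → tr j p m = p m := fun j p m hm => by
    simp only [tr, min_eq_left hm]
  -- invariant representation of {S ≤ n}
  choose C hCmeas hCinv hCeq using fun n => exists_invariant X n (hS n)
  have hmemC : ∀ (n : ℕ) (ω : Ω), (fun m => X m ω) ∈ C n ↔ S ω ≤ (n : ℕ∞) := fun n ω =>
    Set.ext_iff.mp (hCeq n) ω
  set G : ℕ → Set (ℕ → E) := fun k => C k \ ⋃ j, ⋃ _ : j < k, C j with hGdef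
  have hGmeas : ∀ k, MeasurableSet (G k) := fun k =>
    (hCmeas k).diff (MeasurableSet.iUnion fun j => MeasurableSet.iUnion fun _ => hCmeas j)
  have hGiff : ∀ (k : ℕ) (ω : Ω), (fun n => stopped X S n ω) ∈ G k ↔ S ω = (k : ℕ∞) := by
    intro k ω
    constructor
    · rintro ⟨h1, h2⟩
      cases hs : S ω with
      | top =>
        exfalso
        rw [pathS_eq_top X S hs] at h1
        have h3 := (hmemC k ω).mp h1
        rw [hs] at h3
        simp at h3
      | coe j =>
        rw [pathS_eq_coe X S hs] at h1 h2
        rcases lt_trichotomy j k with hjk | hjk | hjk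
        · exfalso
          apply h2
          refine mem_iUnion.mpr ⟨j, mem_iUnion.mpr ⟨hjk, ?_⟩⟩
          have hp : (fun m => X m ω) ∈ C j := (hmemC j ω).mpr hs.le
          exact (hCinv j (tr j fun m => X m ω) (fun m => X m ω) fun m hm =>
            hagree j _ m hm).mpr hp
        · rw [hjk]
        · exfalso
          have hp : (fun m => X m ω) ∈ C k :=
            (hCinv k _ _ fun m hm => hagree j _ m (hm.trans hjk.le)).mp h1
          have h3 := (hmemC k ω).mp hp
          rw [hs] at h3
          exact absurd (Nat.cast_le.mp h3) (not_le.mpr hjk)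
    · intro hs
      rw [pathS_eq_coe X S hs]
      refine ⟨?_, ?_⟩
      · exact (hCinv k _ _ fun m hm => hagree k _ m hm).mpr ((hmemC k ω).mpr hs.le)
      · intro hmem
        obtain ⟨j, hj⟩ := mem_iUnion.mp hmem
        obtain ⟨hjk, hjC⟩ := mem_iUnion.mp hj
        have hp : (fun m => X m ω) ∈ C j :=
          (hCinv j _ _ fun m hm => hagree k _ m (hm.trans hjk.le)).mp hjC
        have h3 := (hmemC j ω).mp hp
        rw [hs] at h3
        exact absurd (Nat.cast_le.mp h3) (not_le.mpr hjk)
  intro A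
  constructor
  · -- hard direction: F_S ⊆ σ(X^S)
    rintro ⟨hA, hAn⟩
    choose D hDmeas hDinv hDeq using fun n => exists_invariant X n (hAn n)
    have hmemD : ∀ (n : ℕ) (ω : Ω),
        (fun m => X m ω) ∈ D n ↔ ω ∈ A ∧ S ω ≤ (n : ℕ∞) := fun n ω =>
      Set.ext_iff.mp (hDeq n) ω
    rw [iSup_natFilt, MeasurableSpace.measurableSet_comap] at hA
    obtain ⟨Di, hDi, hDiA⟩ := hA
    have hmemDi : ∀ ω : Ω, (fun m => X m ω) ∈ Di ↔ ω ∈ A := fun ω => Set.ext_iff.mp hDiA ω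
    have hAk : ∀ k : ℕ, A ∩ {ω | S ω = (k : ℕ∞)} =
        (fun ω (n : ℕ) => stopped X S n ω) ⁻¹' (G k ∩ D k) := by
      intro k
      ext ω
      simp only [mem_inter_iff, mem_preimage, mem_setOf_eq]
      constructor
      · rintro ⟨hωA, hωS⟩
        refine ⟨(hGiff k ω).mpr hωS, ?_⟩
        show (fun n => stopped X S n ω) ∈ D k
        rw [pathS_eq_coe X S hωS]
        exact (hDinv k (tr k fun m => X m ω) (fun m => X m ω) fun m hm =>
          hagree k _ m hm).mpr ((hmemD k ω).mpr ⟨hωA, hωS.le⟩)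
      · rintro ⟨hG', hD'⟩
        have hωS := (hGiff k ω).mp hG'
        refine ⟨?_, hωS⟩
        rw [pathS_eq_coe X S hωS] at hD'
        exact ((hmemD k ω).mp ((hDinv k _ _ fun m hm => hagree k _ m hm).mp hD')).1
    have hAtop : A ∩ {ω | S ω = ⊤} =
        (fun ω (n : ℕ) => stopped X S n ω) ⁻¹' ((⋃ k, G k)ᶜ ∩ Di) := by
      ext ω
      simp only [mem_inter_iff, mem_preimage, mem_setOf_eq, mem_compl_iff]
      constructor
      · rintro ⟨hωA, hωS⟩
        refine ⟨?_, ?_⟩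
        · intro hmem
          obtain ⟨k, hk⟩ := mem_iUnion.mp hmem
          have h3 := (hGiff k ω).mp hk
          rw [hωS] at h3
          simp at h3
        · show (fun n => stopped X S n ω) ∈ Di
          rw [pathS_eq_top X S hωS]
          exact (hmemDi ω).mpr hωA
      · rintro ⟨hnG, hDi'⟩
        have hωS : S ω = ⊤ := by
          cases hs : S ω with
          | top => rfl
          | coe k => exact absurd (mem_iUnion.mpr ⟨k, (hGiff k ω).mpr hs⟩) hnG
        refine ⟨?_, hωS⟩
        rw [pathS_eq_top X S hωS] at hDi'
        exact (hmemDi ω).mp hDi'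
    have hdecomp : A = (fun ω (n : ℕ) => stopped X S n ω) ⁻¹'
        ((⋃ k, G k ∩ D k) ∪ ((⋃ k, G k)ᶜ ∩ Di)) := by
      ext ω
      constructor
      · intro hωA
        cases hs : S ω with
        | coe k =>
          have : ω ∈ (fun ω (n : ℕ) => stopped X S n ω) ⁻¹' (G k ∩ D k) :=
            (hAk k) ▸ (⟨hωA, hs⟩ : ω ∈ A ∩ {ω | S ω = (k : ℕ∞)})
          exact mem_preimage.mpr (mem_union_left _ (mem_iUnion.mpr ⟨k, this⟩))
        | top =>
          have : ω ∈ (fun ω (n : ℕ) => stopped X S n ω) ⁻¹' ((⋃ k, G k)ᶜ ∩ Di) :=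
            hAtop ▸ (⟨hωA, hs⟩ : ω ∈ A ∩ {ω | S ω = ⊤})
          exact mem_preimage.mpr (mem_union_right _ this)
      · intro hω
        rcases mem_preimage.mp hω with hmem | hmem
        · obtain ⟨k, hk⟩ := mem_iUnion.mp hmem
          have : ω ∈ A ∩ {ω | S ω = (k : ℕ∞)} := (hAk k).symm ▸ (hk : _)
          exact this.1
        · have : ω ∈ A ∩ {ω | S ω = ⊤} := hAtop.symm ▸ (hmem : _)
          exact this.1
    refine MeasurableSpace.measurableSet_comap.mpr
      ⟨(⋃ k, G k ∩ D k) ∪ ((⋃ k, G k)ᶜ ∩ Di), ?_, hdecomp.symm⟩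
    exact (MeasurableSet.iUnion fun k => (hGmeas k).inter (hDmeas k)).union
      ((MeasurableSet.iUnion fun k => hGmeas k).compl.inter hDi)
  · -- easy direction: σ(X^S) ⊆ F_S
    intro h
    rw [MeasurableSpace.measurableSet_comap] at h
    obtain ⟨D, hD, hDA⟩ := h
    have hmemA : ∀ ω : Ω, ω ∈ A ↔ (fun n => stopped X S n ω) ∈ D := fun ω =>
      (Set.ext_iff.mp hDA ω).symm
    set Q : ℕ → Set Ω :=
      fun k => {ω | S ω = (k : ℕ∞)} ∩ ((fun ω => tr k (fun m => X m ω)) ⁻¹' D) with hQdef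
    have hQmeas : ∀ k, MeasurableSet[natFilt X k] (Q k) := by
      intro k
      refine MeasurableSet.inter ?_ ?_
      · have heq : {ω | S ω = (k : ℕ∞)} =
            {ω | S ω ≤ (k : ℕ∞)} \ ⋃ j, ⋃ _ : j < k, {ω | S ω ≤ (j : ℕ∞)} := by
          ext ω
          simp only [mem_diff, mem_setOf_eq, mem_iUnion, not_exists]
          constructor
          · intro hs
            refine ⟨hs.le, fun j hj hle => ?_⟩
            rw [hs] at hle
            exact absurd (Nat.cast_le.mp hle) (not_le.mpr hj)
          · rintro ⟨hle, hnot⟩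
            cases hs : S ω with
            | top => rw [hs] at hle; exact absurd hle (by simp)
            | coe j =>
              have hjk : j ≤ k := by rw [hs] at hle; exact_mod_cast hle
              rcases eq_or_lt_of_le hjk with h' | h'
              · rw [h']
              · exact absurd hs.le (hnot j h')
        rw [heq]
        exact (hS k).diff (MeasurableSet.iUnion fun j => MeasurableSet.iUnion fun hj =>
          natFilt_mono X hj.le _ (hS j))
      · rw [natFilt_eq]
        exact MeasurableSpace.measurableSet_comap.mpr ⟨D, hD, rfl⟩
    have hQA : ∀ (k : ℕ) (ω : Ω), ω ∈ Q k → ω ∈ A := by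
      intro k ω ⟨hs, hD'⟩
      refine (hmemA ω).mpr ?_
      rw [pathS_eq_coe X S hs]
      exact hD'
    constructor
    · -- A measurable in ⨆ natFilt
      have hAdecomp : A = (⋃ k, Q k) ∪
          ((⋃ n : ℕ, {ω | S ω ≤ (n : ℕ∞)})ᶜ ∩ ((fun ω (m : ℕ) => X m ω) ⁻¹' D)) := by
        ext ω
        constructor
        · intro hωA
          cases hs : S ω with
          | coe k =>
            refine mem_union_left _ (mem_iUnion.mpr ⟨k, hs, ?_⟩)
            show tr k (fun m => X m ω) ∈ D
            rw [← pathS_eq_coe X S hs]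
            exact (hmemA ω).mp hωA
          | top =>
            refine mem_union_right _ ⟨?_, ?_⟩
            · simp only [mem_compl_iff, mem_iUnion, mem_setOf_eq, not_exists]
              intro n hle
              rw [hs] at hle
              simp at hle
            · show (fun m => X m ω) ∈ D
              rw [← pathS_eq_top X S hs]
              exact (hmemA ω).mp hωA
        · rintro (hmem | ⟨hc, hD'⟩)
          · obtain ⟨k, hk⟩ := mem_iUnion.mp hmem
            exact hQA k ω hk
          · have hs : S ω = ⊤ := by
              cases hs : S ω with
              | top => rfl
              | coe k =>
                exact absurd (mem_iUnion.mpr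
                  ⟨k, show ω ∈ {ω | S ω ≤ ((k : ℕ) : ℕ∞)} from hs.le⟩) hc
            refine (hmemA ω).mpr ?_
            rw [pathS_eq_top X S hs]
            exact hD'
      rw [hAdecomp]
      refine MeasurableSet.union (MeasurableSet.iUnion fun k =>
        le_iSup (fun n => natFilt X n) k _ (hQmeas k)) ?_
      refine MeasurableSet.inter ?_ ?_
      · exact (MeasurableSet.iUnion (f := fun n : ℕ => {ω | S ω ≤ (n : ℕ∞)})
          fun n => le_iSup (fun n => natFilt X n) n _ (hS n)).compl
      · rw [iSup_natFilt]
        exact MeasurableSpace.measurableSet_comap.mpr ⟨D, hD, rfl⟩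
    · -- A ∩ {S ≤ n} measurable in natFilt n
      intro n
      have hcap : A ∩ {ω | S ω ≤ (n : ℕ∞)} = ⋃ k, ⋃ _ : k ≤ n, Q k := by
        ext ω
        constructor
        · rintro ⟨hωA, hle⟩
          have hle' : S ω ≤ (n : ℕ∞) := hle
          cases hs : S ω with
          | top => rw [hs] at hle'; exact absurd hle' (by simp)
          | coe k =>
            have hkn : k ≤ n := by rw [hs] at hle'; exact_mod_cast hle'
            refine mem_iUnion.mpr ⟨k, mem_iUnion.mpr ⟨hkn, hs, ?_⟩⟩
            show tr k (fun m => X m ω) ∈ D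
            rw [← pathS_eq_coe X S hs]
            exact (hmemA ω).mp hωA
        · intro hmem
          obtain ⟨k, hk⟩ := mem_iUnion.mp hmem
          obtain ⟨hkn, hQ'⟩ := mem_iUnion.mp hk
          refine ⟨hQA k ω hQ', ?_⟩
          show S ω ≤ (n : ℕ∞)
          rw [show S ω = ((k : ℕ) : ℕ∞) from hQ'.1]
          exact_mod_cast hkn
      rw [hcap]
      exact MeasurableSet.iUnion fun k => MeasurableSet.iUnion fun hk =>
        natFilt_mono X hk _ (hQmeas k)
end

section
/- Let T = ℕ and let X and Y be processes on Ω with values in (E, ℰ). Let S be a random time which is a stopping time of the natural filtration F^X (equivalently, by the discrete stopping-time equivalence, a stopping time of F^{X^S}), and suppose X^S = Y^S pointwise. Then S is also a stopping time of F^Y, and F^X_S = F^Y_S. -/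
open MeasureTheory Set

variable {Ω E : Type*}

section Aux

variable [mE : MeasurableSpace E]

lemma untop'_natCast (d k : ℕ) : WithTop.untopD d (k : ℕ∞) = k := rfl

lemma untop'_top' (d : ℕ) : WithTop.untopD d (⊤ : ℕ∞) = d := rfl

lemma stopped_eq_of_le {X : ℕ → Ω → E} {S : Ω → ℕ∞} {m : ℕ} {ω : Ω}
    (h : (m : ℕ∞) ≤ S ω) : stopped X S m ω = X m ω := by
  rcases eq_or_ne (S ω) ⊤ with hT | hT
  · rw [stopped, hT, untop'_top', min_self]
  · lift S ω to ℕ using hT with k hk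
    have hmk : m ≤ k := by exact_mod_cast h
    rw [stopped, ← hk, untop'_natCast, min_eq_left hmk]

lemma stopped_eq_of_eq {X : ℕ → Ω → E} {S : Ω → ℕ∞} {m k : ℕ} {ω : Ω}
    (h : S ω = (k : ℕ∞)) (hkm : k ≤ m) : stopped X S m ω = X k ω := by
  rw [stopped, h, untop'_natCast, min_eq_right hkm]

lemma comap_le_natFilt (X : ℕ → Ω → E) {m n : ℕ} (h : m ≤ n) :
    mE.comap (X m) ≤ natFilt X n :=
  le_iSup₂_of_le m h le_rfl

lemma natFilt_mono (X : ℕ → Ω → E) : Monotone (natFilt X) := fun _ _ hab =>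
  iSup₂_le fun m hm => comap_le_natFilt X (hm.trans hab)

/-- The trace of a σ-algebra on a measurable set, as a σ-algebra on the whole space. -/
def traceMS (G : MeasurableSpace Ω) (C : Set Ω) (hC : MeasurableSet[G] C) :
    MeasurableSpace Ω where
  MeasurableSet' B := MeasurableSet[G] (B ∩ C)
  measurableSet_empty := by simpa using (MeasurableSet.empty : MeasurableSet[G] ∅)
  measurableSet_compl B hB := by
    show MeasurableSet[G] (Bᶜ ∩ C)
    have hEq : Bᶜ ∩ C = C \ (B ∩ C) := by
      ext ω; by_cases hω : ω ∈ B <;> simp [hω]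
    rw [hEq]; exact hC.diff hB
  measurableSet_iUnion f hf := by
    show MeasurableSet[G] ((⋃ i, f i) ∩ C)
    rw [Set.iUnion_inter]; exact .iUnion hf

lemma natFilt_inter {G : MeasurableSpace Ω} {C : Set Ω} (hC : MeasurableSet[G] C)
    (X : ℕ → Ω → E) (p : ℕ → Prop)
    (h : ∀ m, p m → ∀ B : Set E, MeasurableSet B → MeasurableSet[G] (X m ⁻¹' B ∩ C))
    {A : Set Ω} (hA : MeasurableSet[⨆ m, ⨆ _ : p m, mE.comap (X m)] A) :
    MeasurableSet[G] (A ∩ C) := by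
  have hle : (⨆ m, ⨆ _ : p m, mE.comap (X m)) ≤ traceMS G C hC := by
    refine iSup₂_le fun m hm => ?_
    rintro A ⟨B, hB, rfl⟩
    exact h m hm B hB
  exact hle A hA

lemma lt_coe_iff' {a : ℕ∞} {m : ℕ} : a < (m : ℕ∞) ↔ ∃ k, k < m ∧ a = (k : ℕ∞) := by
  constructor
  · intro h
    lift a to ℕ using h.ne_top
    exact ⟨a, by exact_mod_cast h, rfl⟩
  · rintro ⟨k, hk, rfl⟩
    exact_mod_cast hk

end Aux

section Main

variable [mE : MeasurableSpace E] (X : ℕ → Ω → E) (S : Ω → ℕ∞)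

lemma le_of_not_le_nat {a : ℕ∞} {n m : ℕ} (h : ¬ a ≤ (n : ℕ∞)) (hm : m ≤ n + 1) :
    (m : ℕ∞) ≤ a := by
  have h1 : (n : ℕ∞) < a := not_le.mp h
  have h2 : ((n : ℕ∞) + 1) ≤ a := Order.add_one_le_of_lt h1
  calc (m : ℕ∞) ≤ ((n + 1 : ℕ) : ℕ∞) := by exact_mod_cast hm
    _ = (n : ℕ∞) + 1 := by push_cast; ring
    _ ≤ a := h2

/-- Claim 1: `{S ≤ n}` is measurable for the natural filtration of the stopped process. -/
lemma stoppedFilt_S (hS : ∀ n : ℕ, MeasurableSet[natFilt X n] {ω | S ω ≤ (n : ℕ∞)}) :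
    ∀ n : ℕ, MeasurableSet[natFilt (stopped X S) n] {ω | S ω ≤ (n : ℕ∞)} := by
  intro n
  induction n with
  | zero =>
    have hle : natFilt X 0 ≤ natFilt (stopped X S) 0 := by
      refine iSup₂_le fun m hm => ?_
      interval_cases m
      have hfun : X 0 = stopped X S 0 := by
        funext ω; exact (stopped_eq_of_le zero_le).symm
      rw [hfun]
      exact comap_le_natFilt _ le_rfl
    exact hle _ (hS 0)
  | succ n IH =>
    have hC : MeasurableSet[natFilt (stopped X S) (n + 1)] {ω | S ω ≤ (n : ℕ∞)}ᶜ :=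
      ((natFilt_mono _ (Nat.le_succ n)) _ IH).compl
    have key : MeasurableSet[natFilt (stopped X S) (n + 1)]
        ({ω | S ω ≤ ((n + 1 : ℕ) : ℕ∞)} ∩ {ω | S ω ≤ (n : ℕ∞)}ᶜ) := by
      refine natFilt_inter hC X (· ≤ n + 1) ?_ (hS (n + 1))
      intro m hm B hB
      have hEq : X m ⁻¹' B ∩ {ω | S ω ≤ (n : ℕ∞)}ᶜ
          = stopped X S m ⁻¹' B ∩ {ω | S ω ≤ (n : ℕ∞)}ᶜ := by
        ext ω
        simp only [Set.mem_inter_iff, Set.mem_preimage, Set.mem_compl_iff, Set.mem_setOf_eq]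
        constructor <;> rintro ⟨h1, h2⟩ <;> refine ⟨?_, h2⟩
        · rwa [stopped_eq_of_le (le_of_not_le_nat h2 hm)]
        · rwa [stopped_eq_of_le (le_of_not_le_nat h2 hm)] at h1
      rw [hEq]
      exact ((comap_le_natFilt (stopped X S) hm) _ ⟨B, hB, rfl⟩).inter hC
    have hdec : {ω | S ω ≤ ((n + 1 : ℕ) : ℕ∞)}
        = {ω | S ω ≤ (n : ℕ∞)} ∪
          ({ω | S ω ≤ ((n + 1 : ℕ) : ℕ∞)} ∩ {ω | S ω ≤ (n : ℕ∞)}ᶜ) := by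
      ext ω
      simp only [Set.mem_union, Set.mem_inter_iff, Set.mem_compl_iff, Set.mem_setOf_eq]
      constructor
      · intro h
        by_cases h' : S ω ≤ (n : ℕ∞)
        · exact Or.inl h'
        · exact Or.inr ⟨h, h'⟩
      · rintro (h | ⟨h, _⟩)
        · exact h.trans (by exact_mod_cast Nat.le_succ n)
        · exact h
    rw [hdec]
    exact (natFilt_mono _ (Nat.le_succ n) _ IH).union key

/-- `{S < m}` is measurable provided all the `{S ≤ k}`, `k < m`, are. -/
lemma S_lt_meas {G : MeasurableSpace Ω} {m : ℕ}
    (h : ∀ k, k < m → MeasurableSet[G] {ω | S ω ≤ (k : ℕ∞)}) :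
    MeasurableSet[G] {ω | S ω < (m : ℕ∞)} := by
  have hset : {ω | S ω < (m : ℕ∞)} = ⋃ k, ⋃ _ : k < m, {ω | S ω ≤ (k : ℕ∞)} := by
    ext ω
    simp only [Set.mem_setOf_eq, Set.mem_iUnion]
    constructor
    · intro hω
      obtain ⟨k, hk, hEq⟩ := lt_coe_iff'.mp hω
      exact ⟨k, hk, le_of_eq hEq⟩
    · rintro ⟨k, hk, hle⟩
      exact lt_of_le_of_lt hle (by exact_mod_cast hk)
  rw [hset]
  exact .iUnion fun k => .iUnion fun hk => h k hk

lemma S_eq_set (k : ℕ) :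
    {ω | S ω = (k : ℕ∞)} = {ω | S ω ≤ (k : ℕ∞)} ∩ {ω | S ω < (k : ℕ∞)}ᶜ := by
  ext ω
  simp only [Set.mem_inter_iff, Set.mem_compl_iff, Set.mem_setOf_eq]
  constructor
  · rintro h; rw [h]; exact ⟨le_rfl, lt_irrefl _⟩
  · rintro ⟨h1, h2⟩; exact le_antisymm h1 (not_lt.mp h2)

/-- Claim 2 core: the stopped process at time `m` is measurable for `natFilt X m`,
provided `{S ≤ k}` is `natFilt X m`-measurable for `k < m`. -/
lemma comap_stopped_le {m : ℕ}
    (h : ∀ k, k < m → MeasurableSet[natFilt X m] {ω | S ω ≤ (k : ℕ∞)}) :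
    mE.comap (stopped X S m) ≤ natFilt X m := by
  rintro A ⟨B, hB, rfl⟩
  have hlt : MeasurableSet[natFilt X m] {ω | S ω < (m : ℕ∞)} := S_lt_meas S h
  have hDecomp : stopped X S m ⁻¹' B =
      (⋃ k, ⋃ _ : k < m, ({ω | S ω = (k : ℕ∞)} ∩ X k ⁻¹' B)) ∪
        ({ω | S ω < (m : ℕ∞)}ᶜ ∩ X m ⁻¹' B) := by
    ext ω
    simp only [Set.mem_preimage, Set.mem_union, Set.mem_iUnion, Set.mem_inter_iff,
      Set.mem_compl_iff, Set.mem_setOf_eq]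
    by_cases hω : S ω < (m : ℕ∞)
    · obtain ⟨k, hk, hEq⟩ := lt_coe_iff'.mp hω
      rw [stopped_eq_of_eq hEq hk.le]
      constructor
      · intro hb
        exact Or.inl ⟨k, hk, hEq, hb⟩
      · rintro (⟨j, hj, hEqj, hb⟩ | ⟨hns, hb⟩)
        · have hjk : k = j := by
            rw [hEq] at hEqj; exact_mod_cast hEqj
          rwa [hjk]
        · exact absurd hω hns
    · have hge : (m : ℕ∞) ≤ S ω := not_lt.mp hω
      rw [stopped_eq_of_le hge]
      constructor
      · intro hb
        exact Or.inr ⟨hω, hb⟩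
      · rintro (⟨j, hj, hEqj, hb⟩ | ⟨_, hb⟩)
        · refine absurd ?_ hω
          rw [hEqj]
          exact_mod_cast hj
        · exact hb
  rw [hDecomp]
  refine MeasurableSet.union ?_
    (hlt.compl.inter ((comap_le_natFilt X le_rfl) _ ⟨B, hB, rfl⟩))
  refine .iUnion fun k => .iUnion fun hk => ?_
  have hSk : MeasurableSet[natFilt X m] {ω | S ω = (k : ℕ∞)} := by
    rw [S_eq_set]
    exact (h k hk).inter (S_lt_meas S fun j hj => h j (hj.trans hk)).compl
  exact hSk.inter ((comap_le_natFilt X hk.le) _ ⟨B, hB, rfl⟩)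

/-- Claim 3: transfer of the stopped-σ-algebra conditions. -/
lemma inter_S_le_mem (hS : ∀ n : ℕ, MeasurableSet[natFilt X n] {ω | S ω ≤ (n : ℕ∞)})
    {n : ℕ} {A : Set Ω}
    (h : ∀ k, k ≤ n → MeasurableSet[natFilt X k] (A ∩ {ω | S ω ≤ (k : ℕ∞)})) :
    MeasurableSet[natFilt (stopped X S) n] (A ∩ {ω | S ω ≤ (n : ℕ∞)}) := by
  have hG := stoppedFilt_S X S hS
  have hdecomp : A ∩ {ω | S ω ≤ (n : ℕ∞)} =
      ⋃ k, ⋃ _ : k ≤ n,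
        ((A ∩ {ω | S ω ≤ (k : ℕ∞)}) ∩ {ω | S ω < (k : ℕ∞)}ᶜ) := by
    ext ω
    simp only [Set.mem_inter_iff, Set.mem_iUnion, Set.mem_compl_iff, Set.mem_setOf_eq]
    constructor
    · rintro ⟨hA, hn⟩
      obtain ⟨k, hk, hEq⟩ := lt_coe_iff'.mp (lt_of_le_of_lt hn (by exact_mod_cast lt_add_one n))
      have hkn : k ≤ n := by
        have := hEq ▸ hn
        exact_mod_cast this
      exact ⟨k, hkn, ⟨hA, le_of_eq hEq⟩, by rw [hEq]; exact lt_irrefl _⟩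
    · rintro ⟨k, hk, ⟨hA, h1⟩, _⟩
      exact ⟨hA, h1.trans (by exact_mod_cast hk)⟩
  rw [hdecomp]
  refine .iUnion fun k => .iUnion fun hk => ?_
  have hCk : MeasurableSet[natFilt (stopped X S) n] {ω | S ω < (k : ℕ∞)}ᶜ :=
    (S_lt_meas S fun j hj => natFilt_mono _ ((hj.le.trans hk)) _ (hG j)).compl
  refine natFilt_inter hCk X (· ≤ k) ?_ (h k hk)
  intro m hm B hB
  have hEq : X m ⁻¹' B ∩ {ω | S ω < (k : ℕ∞)}ᶜ
      = stopped X S m ⁻¹' B ∩ {ω | S ω < (k : ℕ∞)}ᶜ := by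
    ext ω
    simp only [Set.mem_inter_iff, Set.mem_preimage, Set.mem_compl_iff, Set.mem_setOf_eq]
    have himp : ¬ S ω < (k : ℕ∞) → stopped X S m ω = X m ω := fun hge =>
      stopped_eq_of_le (le_trans (by exact_mod_cast hm) (not_lt.mp hge))
    constructor <;> rintro ⟨h1, h2⟩ <;> refine ⟨?_, h2⟩
    · rwa [himp h2]
    · rwa [himp h2] at h1
  rw [hEq]
  exact ((comap_le_natFilt (stopped X S) (hm.trans hk)) _ ⟨B, hB, rfl⟩).inter hCk

lemma iSup_natFilt_eq : (⨆ n, natFilt X n) = ⨆ m, ⨆ _ : True, mE.comap (X m) := by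
  apply le_antisymm
  · exact iSup_le fun n => iSup₂_le fun m _ => le_iSup₂_of_le m trivial le_rfl
  · exact iSup₂_le fun m _ => le_trans (comap_le_natFilt X le_rfl) (le_iSup _ m)

/-- Claim 4: the `S = ∞` part. -/
lemma inter_S_top_mem (hS : ∀ n : ℕ, MeasurableSet[natFilt X n] {ω | S ω ≤ (n : ℕ∞)})
    {A : Set Ω} (hA : MeasurableSet[⨆ n, natFilt X n] A) :
    MeasurableSet[⨆ n, natFilt (stopped X S) n]
      (A ∩ ⋂ n : ℕ, {ω | S ω ≤ (n : ℕ∞)}ᶜ) := by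
  have hG := stoppedFilt_S X S hS
  have hC : MeasurableSet[⨆ n, natFilt (stopped X S) n]
      (⋂ n : ℕ, {ω | S ω ≤ (n : ℕ∞)}ᶜ) :=
    .iInter fun n => ((le_iSup (natFilt (stopped X S)) n) _ (hG n)).compl
  rw [iSup_natFilt_eq X] at hA
  refine natFilt_inter hC X (fun _ => True) ?_ hA
  intro m _ B hB
  have hEq : X m ⁻¹' B ∩ (⋂ n : ℕ, {ω | S ω ≤ (n : ℕ∞)}ᶜ)
      = stopped X S m ⁻¹' B ∩ (⋂ n : ℕ, {ω | S ω ≤ (n : ℕ∞)}ᶜ) := by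
    ext ω
    simp only [Set.mem_inter_iff, Set.mem_preimage, Set.mem_iInter, Set.mem_compl_iff,
      Set.mem_setOf_eq]
    have himp : (∀ n : ℕ, ¬ S ω ≤ (n : ℕ∞)) → stopped X S m ω = X m ω := fun hge =>
      stopped_eq_of_le (le_of_lt (not_le.mp (hge m)))
    constructor <;> rintro ⟨h1, h2⟩ <;> refine ⟨?_, h2⟩
    · rwa [himp h2]
    · rwa [himp h2] at h1
  rw [hEq]
  exact ((comap_le_natFilt (stopped X S) le_rfl).trans
    (le_iSup (natFilt (stopped X S)) m) _ ⟨B, hB, rfl⟩).inter hC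

end Main

lemma transfer [mE : MeasurableSpace E] (X Y : ℕ → Ω → E) (S : Ω → ℕ∞)
    (hS : ∀ n : ℕ, MeasurableSet[natFilt X n] {ω | S ω ≤ (n : ℕ∞)})
    (hSY : ∀ n : ℕ, MeasurableSet[natFilt Y n] {ω | S ω ≤ (n : ℕ∞)})
    (hstop : stopped X S = stopped Y S) {A : Set Ω}
    (h1 : MeasurableSet[⨆ n, natFilt X n] A)
    (h2 : ∀ n : ℕ, MeasurableSet[natFilt X n] (A ∩ {ω | S ω ≤ (n : ℕ∞)})) :
    MeasurableSet[⨆ n, natFilt Y n] A ∧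
      ∀ n : ℕ, MeasurableSet[natFilt Y n] (A ∩ {ω | S ω ≤ (n : ℕ∞)}) := by
  have hGle : ∀ n, natFilt (stopped Y S) n ≤ natFilt Y n := fun n =>
    iSup₂_le fun m hm =>
      (comap_stopped_le Y S fun k hk =>
        natFilt_mono Y hk.le _ (hSY k)).trans (natFilt_mono Y hm)
  have h2' : ∀ n : ℕ, MeasurableSet[natFilt Y n] (A ∩ {ω | S ω ≤ (n : ℕ∞)}) := by
    intro n
    have hmem := inter_S_le_mem X S hS (n := n) (A := A) fun k _ => h2 k
    rw [hstop] at hmem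
    exact hGle n _ hmem
  refine ⟨?_, h2'⟩
  have hAeq : A = (⋃ n : ℕ, A ∩ {ω | S ω ≤ (n : ℕ∞)}) ∪
      (A ∩ ⋂ n : ℕ, {ω | S ω ≤ (n : ℕ∞)}ᶜ) := by
    ext ω
    simp only [Set.mem_union, Set.mem_iUnion, Set.mem_inter_iff, Set.mem_iInter,
      Set.mem_compl_iff, Set.mem_setOf_eq]
    constructor
    · intro hω
      by_cases hT : ∃ n : ℕ, S ω ≤ (n : ℕ∞)
      · obtain ⟨n, hn⟩ := hT
        exact Or.inl ⟨n, hω, hn⟩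
      · push_neg at hT
        exact Or.inr ⟨hω, fun n => not_le.mpr (hT n)⟩
    · rintro (⟨n, hω, _⟩ | ⟨hω, _⟩) <;> exact hω
  rw [hAeq]
  refine MeasurableSet.union (.iUnion fun n => le_iSup (natFilt Y) n _ (h2' n)) ?_
  have hmem := inter_S_top_mem X S hS h1
  rw [hstop] at hmem
  exact (iSup_mono hGle) _ hmem

/-- **Observational consistency, discrete time.** If `S` is a stopping time of the natural
filtration of `X` and the stopped processes `X^S` and `Y^S` agree pointwise, then `S` is
also a stopping time of the natural filtration of `Y`, and `F^X_S = F^Y_S`. -/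
theorem stmt_4 [MeasurableSpace E] (X Y : ℕ → Ω → E) (S : Ω → ℕ∞)
    (hS : ∀ n : ℕ, MeasurableSet[natFilt X n] {ω | S ω ≤ (n : ℕ∞)})
    (hXY : ∀ (n : ℕ) (ω : Ω), stopped X S n ω = stopped Y S n ω) :
    (∀ n : ℕ, MeasurableSet[natFilt Y n] {ω | S ω ≤ (n : ℕ∞)}) ∧
      (∀ A : Set Ω,
        (MeasurableSet[⨆ n, natFilt X n] A ∧
            ∀ n : ℕ, MeasurableSet[natFilt X n] (A ∩ {ω | S ω ≤ (n : ℕ∞)})) ↔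
          (MeasurableSet[⨆ n, natFilt Y n] A ∧
            ∀ n : ℕ, MeasurableSet[natFilt Y n] (A ∩ {ω | S ω ≤ (n : ℕ∞)}))) := by
  have hstop : stopped X S = stopped Y S := funext fun n => funext fun ω => hXY n ω
  have hSY : ∀ n : ℕ, MeasurableSet[natFilt Y n] {ω | S ω ≤ (n : ℕ∞)} := by
    intro n
    induction n using Nat.strong_induction_on with
    | _ n IH =>
      have hle : natFilt (stopped Y S) n ≤ natFilt Y n := by
        refine iSup₂_le fun m hm => ?_
        refine (comap_stopped_le Y S fun k hk => ?_).trans (natFilt_mono Y hm)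
        exact natFilt_mono Y hk.le _ (IH k (hk.trans_le hm))
      have hmem := stoppedFilt_S X S hS n
      rw [hstop] at hmem
      exact hle _ hmem
  refine ⟨hSY, fun A => ⟨fun h => transfer X Y S hS hSY hstop h.1 h.2,
    fun h => transfer Y X S hSY hS hstop.symm h.1 h.2⟩⟩
end

section
/- In a coherent stochastic control system with the weak upwards lattice property and {0, ∞} ⊆ 𝔊, the Bellman system V is a (C, 𝔊)-supermartingale system: for all S, T ∈ 𝔊 and c ∈ C such that S^d ≤ T^d P^d-a.s. for all d ∈ D(c,T), one has E^{P^c}[V(c,T) | G^c_{S^c}] ≤ V(c,S) P^c-a.s. -/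
open MeasureTheory Set Filter

variable {Ω C T : Type*}

/-- The σ-field `G_S` of a filtration `G` at a stopping time `S`. -/
def sigmaAtTime [LinearOrder T] (G : T → MeasurableSpace Ω) (S : Ω → WithTop T)
    (hS : ∀ t : T, MeasurableSet[G t] {ω | S ω ≤ (t : WithTop T)}) : MeasurableSpace Ω where
  MeasurableSet' A := MeasurableSet[⨆ t, G t] A ∧
    ∀ t : T, MeasurableSet[G t] (A ∩ {ω | S ω ≤ (t : WithTop T)})
  measurableSet_empty := ⟨@MeasurableSet.empty _ (⨆ t, G t), fun t => by simp⟩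
  measurableSet_compl := by
    rintro A ⟨hAinf, hA⟩
    refine ⟨hAinf.compl, fun t => ?_⟩
    have : Aᶜ ∩ {ω | S ω ≤ (t : WithTop T)} =
        {ω | S ω ≤ (t : WithTop T)} ∩ (A ∩ {ω | S ω ≤ (t : WithTop T)})ᶜ := by
      ext ω
      simp only [Set.mem_inter_iff, Set.mem_compl_iff, Set.mem_setOf_eq]
      tauto
    rw [this]
    exact (hS t).inter (hA t).compl
  measurableSet_iUnion := by
    intro f hf
    refine ⟨MeasurableSet.iUnion fun i => (hf i).1, fun t => ?_⟩
    rw [Set.iUnion_inter]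
    exact MeasurableSet.iUnion fun i => (hf i).2 t

/-- The positive part of an extended-real number, as a value in `[0,∞]`. -/
noncomputable def epos (x : EReal) : ENNReal :=
  if x = ⊤ then ⊤ else ENNReal.ofReal x.toReal

/-- The negative part of an extended-real number, as a value in `[0,∞]`. -/
noncomputable def eneg (x : EReal) : ENNReal := epos (-x)

/-- `Y` is a version of the conditional expectation `E[X | G]` under `P`, for an
extended-real-valued `X`: `Y` is `G`-measurable and for every `B ∈ G` the (possibly
infinite) integrals of `X` and `Y` over `B` agree, in the subtraction-free form
`∫_B Y⁺ + ∫_B X⁻ = ∫_B X⁺ + ∫_B Y⁻`. -/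
def IsCondExp {m : MeasurableSpace Ω} (G : MeasurableSpace Ω) (P : @Measure Ω m)
    (X Y : Ω → EReal) : Prop :=
  Measurable[G] Y ∧ ∀ B : Set Ω, MeasurableSet[G] B →
    (∫⁻ ω in B, epos (Y ω) ∂P) + (∫⁻ ω in B, eneg (X ω) ∂P) =
      (∫⁻ ω in B, epos (X ω) ∂P) + (∫⁻ ω in B, eneg (Y ω) ∂P)

/-- `Z` is a `P`-essential supremum of the family `F`: it is an a.s. upper bound of the
family which is a.s. below any other a.s. upper bound. -/
def IsEssSup {ι : Type*} {m : MeasurableSpace Ω} (P : @Measure Ω m)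
    (F : ι → Ω → EReal) (Z : Ω → EReal) : Prop :=
  (∀ i, ∀ᵐ ω ∂P, F i ω ≤ Z ω) ∧
    ∀ W : Ω → EReal, (∀ i, ∀ᵐ ω ∂P, F i ω ≤ W ω) → ∀ᵐ ω ∂P, Z ω ≤ W ω

/-- The expectation of an extended-real random variable `f` under `P`, defined (as an
extended real) whenever one of the parts is integrable. -/
noncomputable def eInt {m : MeasurableSpace Ω} (P : @Measure Ω m) (f : Ω → EReal) : EReal :=
  ((∫⁻ ω, epos (f ω) ∂P : ENNReal) : EReal) - ((∫⁻ ω, eneg (f ω) ∂P : ENNReal) : EReal)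

/-- A **coherent stochastic control system** (a stochastic control system with adaptive
control dynamics which is stable under stopping), with time set `T`, control set `C` and
sample space `Ω`. -/
structure CCS (Ω C T : Type*) [LinearOrder T] [OrderBot T] where
  /-- the ambient σ-field (containing the domains of all the `P c`) -/
  m : MeasurableSpace Ω
  /-- the terminal informations `F^c` -/
  F : C → MeasurableSpace Ω
  hF : ∀ c, F c ≤ m
  /-- the control laws `P^c` -/
  P : C → @Measure Ω m
  hP : ∀ c, IsProbabilityMeasure (P c)
  /-- the reward function -/
  J : C → Ω → EReal
  hJmeas : ∀ c, Measurable[F c] (J c)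
  hJneg : ∀ c, (∫⁻ ω, eneg (J c ω) ∂P c) < ⊤
  /-- the observed filtrations `G^c` -/
  G : C → T → MeasurableSpace Ω
  hGmono : ∀ c, Monotone (G c)
  hGF : ∀ c, (⨆ t, G c t) ≤ F c
  /-- the triviality and equality of the `G^c` and `P^c` at time `0 = ⊥` -/
  hG0eq : ∀ c d, G c ⊥ = G d ⊥
  hG0triv : ∀ c, ∀ A : Set Ω, MeasurableSet[G c ⊥] A → P c A = 0 ∨ P c A = 1
  hP0 : ∀ c d, ∀ A : Set Ω, MeasurableSet[G c ⊥] A → P c A = P d A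
  /-- the distinguished family `𝔊` of control times -/
  CT : Set (C → Ω → WithTop T)
  hCT : ∀ S ∈ CT, ∀ c, ∀ t : T, MeasurableSet[G c t] {ω | S c ω ≤ (t : WithTop T)}
  /-- the adaptive control dynamics `D(c, S)` -/
  D : C → (C → Ω → WithTop T) → Set C
  hD_self : ∀ c, ∀ S ∈ CT, c ∈ D c S
  hD_time : ∀ c d, ∀ S ∈ CT, d ∈ D c S → S c = S d
  hD_class : ∀ c d, ∀ S ∈ CT, d ∈ D c S → D c S = D d S
  hD_mono : ∀ S ∈ CT, ∀ T' ∈ CT, ∀ c,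
    (∀ d ∈ D c T', ∀ᵐ ω ∂P d, S d ω ≤ T' d ω) → D c T' ⊆ D c S
  hD_top : ∀ c, ∀ S ∈ CT, (∀ ω, S c ω = ⊤) → D c S = {c}
  hD_bot : ∀ c, ∀ S ∈ CT, (∀ ω, S c ω = ((⊥ : T) : WithTop T)) → D c S = Set.univ
  /-- stability under stopping: informational consistency -/
  hStableG : ∀ c d, ∀ S, ∀ hS : S ∈ CT, d ∈ D c S →
    sigmaAtTime (G c) (S c) (hCT S hS c) = sigmaAtTime (G d) (S d) (hCT S hS d)
  /-- stability under stopping: consistency of the laws -/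
  hStableP : ∀ c d, ∀ S, ∀ hS : S ∈ CT, d ∈ D c S →
    ∀ A : Set Ω, MeasurableSet[sigmaAtTime (G c) (S c) (hCT S hS c)] A → P c A = P d A

section ErealHelpers

@[simp] lemma epos_top : epos (⊤ : EReal) = ⊤ := if_pos rfl

@[simp] lemma epos_coe (r : ℝ) : epos (r : EReal) = ENNReal.ofReal r := by
  simp [epos, EReal.coe_ne_top]

@[simp] lemma epos_bot : epos (⊥ : EReal) = 0 := by
  simp [epos]

lemma epos_of_nonpos {x : EReal} (h : x ≤ 0) : epos x = 0 := by
  induction x using EReal.rec with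
  | bot => simp
  | coe r => simp only [epos_coe]; exact ENNReal.ofReal_eq_zero.2 (by exact_mod_cast h)
  | top => simp at h

lemma monotone_epos : Monotone epos := by
  intro x y h
  induction x using EReal.rec with
  | bot => simp
  | top => rw [top_le_iff.1 h]
  | coe r =>
    induction y using EReal.rec with
    | bot => simp at h
    | top => simp
    | coe s => simp only [epos_coe]; exact ENNReal.ofReal_le_ofReal (by exact_mod_cast h)

lemma measurable_epos : Measurable epos := by
  have : epos = fun x => if x = ⊤ then (⊤ : ENNReal) else ENNReal.ofReal x.toReal := rfl
  rw [this]
  exact Measurable.ite (measurableSet_singleton _) measurable_const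
    (ENNReal.measurable_ofReal.comp measurable_ereal_toReal)

lemma measurable_eneg : Measurable eneg := by
  have : eneg = fun x => epos (-x) := rfl
  rw [this]
  exact measurable_epos.comp measurable_neg

lemma eneg_of_nonneg {x : EReal} (h : 0 ≤ x) : eneg x = 0 :=
  epos_of_nonpos (by simpa using EReal.neg_le_neg_iff.2 h)

lemma antitone_eneg : Antitone eneg := fun x y h =>
  monotone_epos (EReal.neg_le_neg_iff.2 h)

@[simp] lemma eneg_coe (r : ℝ) : eneg (r : EReal) = ENNReal.ofReal (-r) := by
  simp [eneg, ← EReal.coe_neg]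

lemma eneg_min {M : ℝ} (hM : 0 ≤ M) (x : EReal) : eneg (min (M : EReal) x) = eneg x := by
  rcases le_total 0 x with hx | hx
  · rw [eneg_of_nonneg hx, eneg_of_nonneg (le_min (by exact_mod_cast hM) hx)]
  · rw [min_eq_right (hx.trans (by exact_mod_cast hM))]

end ErealHelpers
section ErealHelpers2

open scoped Classical in
private lemma ite_exists_eq_iSup {ι : Type*} (p : ι → Prop) (c : ENNReal) :
    (if ∃ i, p i then c else 0) = ⨆ i, if p i then c else 0 := by
  by_cases h : ∃ i, p i
  · rw [if_pos h]
    obtain ⟨i, hi⟩ := h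
    refine le_antisymm ?_ (iSup_le fun j => by split <;> simp)
    exact le_iSup_of_le i (by rw [if_pos hi])
  · rw [if_neg h]
    push_neg at h
    simp [h]

open scoped Classical in
lemma epos_eq_iSup (x : EReal) :
    epos x = ⨆ q : ℚ, if ((q : ℝ) : EReal) < x then ENNReal.ofReal q else 0 := by
  induction x using EReal.rec with
  | bot => simp
  | top =>
    simp only [epos_top, EReal.coe_lt_top, if_true]
    rw [eq_comm, iSup_eq_top]
    intro b hb
    obtain ⟨n, hn⟩ := ENNReal.exists_nat_gt hb.ne
    refine ⟨(n : ℚ), hn.trans_le ?_⟩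
    rw [← ENNReal.ofReal_natCast n]
    exact ENNReal.ofReal_le_ofReal (by push_cast; exact le_refl _)
  | coe r =>
    simp only [epos_coe, EReal.coe_lt_coe_iff]
    refine le_antisymm ?_ (iSup_le fun q => ?_)
    · refine ENNReal.le_of_forall_pos_le_add fun ε hε _ => ?_
      obtain ⟨q, hq1, hq2⟩ := exists_rat_btwn (sub_lt_self r (by positivity : (0:ℝ) < ε))
      calc ENNReal.ofReal r ≤ ENNReal.ofReal (q + ε) := by
            apply ENNReal.ofReal_le_ofReal; linarith
        _ ≤ ENNReal.ofReal q + ENNReal.ofReal ε := ENNReal.ofReal_add_le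
        _ ≤ (⨆ q : ℚ, if ((q:ℝ) : ℝ) < r then ENNReal.ofReal q else 0) + ε := by
            gcongr
            · refine le_iSup_of_le q ?_
              rw [if_pos (by exact_mod_cast hq2)]
            · simp
    · split
      · next h => exact ENNReal.ofReal_le_ofReal (by exact_mod_cast le_of_lt (by exact_mod_cast h))
      · simp

lemma epos_iSup {ι : Type*} (u : ι → EReal) : epos (⨆ i, u i) = ⨆ i, epos (u i) := by
  classical
  cases isEmpty_or_nonempty ι with
  | inl h => simp [iSup_of_empty]
  | inr h =>
    refine le_antisymm ?_ (iSup_le fun i => monotone_epos (le_iSup u i))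
    rw [epos_eq_iSup]
    refine iSup_le fun q => ?_
    split
    · next hq =>
      rw [lt_iSup_iff] at hq
      obtain ⟨i, hi⟩ := hq
      refine le_iSup_of_le i ?_
      rw [epos_eq_iSup (u i)]
      exact le_iSup_of_le q (by rw [if_pos hi])
    · simp

lemma epos_iInf_antitone (u : ℕ → EReal) (hu : Antitone u) :
    epos (⨅ n, u n) = ⨅ n, epos (u n) := by
  refine le_antisymm (le_iInf fun n => monotone_epos (iInf_le u n)) ?_
  by_cases htop : ∀ n, u n = ⊤
  · simp [htop, iInf_const]
  push_neg at htop
  obtain ⟨N, hN⟩ := htop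
  have hxt : (⨅ n, u n) ≠ ⊤ := fun h => hN (top_le_iff.1 (h ▸ iInf_le u N))
  by_cases hxb : (⨅ n, u n) = ⊥
  · rw [hxb, epos_bot]
    have : (⨅ n, u n) < 0 := hxb ▸ bot_lt_iff_ne_bot.2 (by simp)
    rw [iInf_lt_iff] at this
    obtain ⟨n, hn⟩ := this
    exact iInf_le_of_le n (le_of_eq (epos_of_nonpos hn.le))
  refine ENNReal.le_of_forall_pos_le_add fun ε hε _ => ?_
  have h1 : (⨅ n, u n) < ((⨅ n, u n).toReal + ε : ℝ) := by
    nth_rewrite 1 [← EReal.coe_toReal hxt hxb]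
    refine lt_of_le_of_lt (le_of_eq rfl) (EReal.coe_lt_coe_iff.2 ?_)
    have : (0:ℝ) < ε := by positivity
    linarith
  rw [iInf_lt_iff] at h1
  obtain ⟨n, hn⟩ := h1
  refine iInf_le_of_le n ?_
  calc epos (u n) ≤ epos (((⨅ n, u n).toReal + ε : ℝ) : EReal) := monotone_epos hn.le
    _ = ENNReal.ofReal ((⨅ n, u n).toReal + ε) := epos_coe _
    _ ≤ ENNReal.ofReal (⨅ n, u n).toReal + ENNReal.ofReal ε := ENNReal.ofReal_add_le
    _ = epos (⨅ n, u n) + ε := by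
        rw [← epos_coe, EReal.coe_toReal hxt hxb, ENNReal.ofReal_coe_nnreal]

end ErealHelpers2
section ErealSubHelpers

lemma coe_ennreal_eq_real {z : ENNReal} (hz : z ≠ ⊤) :
    (z : EReal) = ((z.toReal : ℝ) : EReal) := by
  lift z to NNReal using hz
  rw [EReal.coe_nnreal_eq_coe_real, ENNReal.coe_toReal]

/-- Workhorse: from a subtraction-free 4-term inequality to an `EReal` inequality. -/
lemma ereal_sub_le_sub {a b c d : ENNReal} (hb : b ≠ ⊤) (hd : d ≠ ⊤)
    (h : a + d ≤ c + b) : (a : EReal) - (b : EReal) ≤ (c : EReal) - (d : EReal) := by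
  by_cases hc : c = ⊤
  · subst hc
    rw [coe_ennreal_eq_real hd, EReal.coe_ennreal_top, EReal.top_sub_coe]
    exact le_top
  have ha : a ≠ ⊤ :=
    ne_top_of_le_ne_top (ENNReal.add_ne_top.2 ⟨hc, hb⟩) (le_self_add.trans h)
  rw [coe_ennreal_eq_real ha, coe_ennreal_eq_real hb, coe_ennreal_eq_real hc,
    coe_ennreal_eq_real hd, ← EReal.coe_sub, ← EReal.coe_sub, EReal.coe_le_coe_iff]
  have h' : a.toReal + d.toReal ≤ c.toReal + b.toReal := by
    rw [← ENNReal.toReal_add ha hd, ← ENNReal.toReal_add hc hb]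
    exact ENNReal.toReal_mono (by finiteness) h
  linarith

lemma ereal_sub_eq_sub {a b c d : ENNReal} (hb : b ≠ ⊤) (hd : d ≠ ⊤)
    (h : a + d = c + b) : (a : EReal) - (b : EReal) = (c : EReal) - (d : EReal) :=
  le_antisymm (ereal_sub_le_sub hb hd h.le) (ereal_sub_le_sub hd hb h.ge)

lemma coe_epos {w : EReal} (hw : 0 ≤ w) : ((epos w : ENNReal) : EReal) = w := by
  induction w using EReal.rec with
  | bot => simp at hw
  | top => simp
  | coe r =>
    rw [epos_coe, EReal.coe_ennreal_ofReal, max_eq_left (by exact_mod_cast hw)]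

lemma coe_le_epos {z : ENNReal} {w : EReal} (h : (z : EReal) ≤ w) : z ≤ epos w := by
  have hw : 0 ≤ w := le_trans (EReal.coe_ennreal_nonneg z) h
  calc z = epos ((z : EReal)) := by
        induction z with
        | top => simp
        | coe x => rw [EReal.coe_nnreal_eq_coe_real, epos_coe, ENNReal.ofReal_coe_nnreal]
    _ ≤ epos w := monotone_epos h

lemma enn_iSup_sub_le {ι : Type*} [Nonempty ι] (x : ι → ENNReal) (n : ENNReal) (hn : n ≠ ⊤)
    (R : EReal) (h : ∀ k, (x k : EReal) - (n : EReal) ≤ R) :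
    ((⨆ k, x k : ENNReal) : EReal) - (n : EReal) ≤ R := by
  have hRn : ∀ k, (x k : EReal) ≤ R + (n : EReal) := by
    intro k
    refine (EReal.sub_le_iff_le_add ?_ ?_).1 (h k)
    · left; exact EReal.coe_ennreal_ne_bot _
    · left; rw [coe_ennreal_eq_real hn]; exact EReal.coe_ne_top _
  have h0 : (0 : EReal) ≤ R + (n : EReal) :=
    le_trans (EReal.coe_ennreal_nonneg _) (hRn (Classical.arbitrary ι))
  have : ((⨆ k, x k : ENNReal) : EReal) ≤ R + (n : EReal) := by
    rw [← coe_epos h0]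
    exact EReal.coe_ennreal_le_coe_ennreal_iff.2 (iSup_le fun k => coe_le_epos (hRn k))
  refine (EReal.sub_le_iff_le_add ?_ ?_).2 this
  · left; exact EReal.coe_ennreal_ne_bot _
  · left; rw [coe_ennreal_eq_real hn]; exact EReal.coe_ne_top _

lemma ereal_le_of_forall_add {x : EReal} {y : ℝ}
    (h : ∀ ε : ℝ, 0 < ε → x ≤ ((y + ε : ℝ) : EReal)) : x ≤ (y : EReal) := by
  by_contra hc
  push_neg at hc
  obtain ⟨q, hq1, hq2⟩ := EReal.exists_rat_btwn_of_lt hc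
  have := h ((q : ℝ) - y) (by exact_mod_cast sub_pos.2 (by exact_mod_cast hq1))
  rw [show y + ((q:ℝ) - y) = (q:ℝ) by ring] at this
  exact absurd (this.trans_lt hq2) (lt_irrefl x)
section EIntHelpers

@[simp] lemma eneg_top : eneg (⊤ : EReal) = 0 := by
  rw [eneg, EReal.neg_top, epos_bot]

@[simp] lemma eneg_bot : eneg (⊥ : EReal) = ⊤ := by
  rw [eneg, EReal.neg_bot, epos_top]

variable {m0 : MeasurableSpace Ω} {μ : @MeasureTheory.Measure Ω m0}

lemma eInt_mono {f g : Ω → EReal} (h : ∀ᵐ ω ∂μ, f ω ≤ g ω)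
    (hf : (∫⁻ ω, eneg (f ω) ∂μ) ≠ ⊤) (hg : (∫⁻ ω, eneg (g ω) ∂μ) ≠ ⊤) :
    eInt μ f ≤ eInt μ g := by
  refine ereal_sub_le_sub hf hg (add_le_add ?_ ?_)
  · exact MeasureTheory.lintegral_mono_ae (h.mono fun ω hω => monotone_epos hω)
  · exact MeasureTheory.lintegral_mono_ae (h.mono fun ω hω => antitone_eneg hω)

lemma eInt_const (x : ℝ) (hμ : μ Set.univ ≠ ⊤) :
    eInt μ (fun _ => (x : EReal)) = ((x * (μ Set.univ).toReal : ℝ) : EReal) := by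
  rw [eInt, MeasureTheory.lintegral_const, MeasureTheory.lintegral_const, epos_coe, eneg_coe]
  have fin1 : ENNReal.ofReal x * μ Set.univ ≠ ⊤ := ENNReal.mul_ne_top ENNReal.ofReal_ne_top hμ
  have fin2 : ENNReal.ofReal (-x) * μ Set.univ ≠ ⊤ := ENNReal.mul_ne_top ENNReal.ofReal_ne_top hμ
  rw [coe_ennreal_eq_real fin1, coe_ennreal_eq_real fin2, ← EReal.coe_sub, EReal.coe_eq_coe_iff,
    ENNReal.toReal_mul, ENNReal.toReal_mul]
  rcases le_total 0 x with hx | hx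
  · rw [ENNReal.toReal_ofReal hx, ENNReal.ofReal_eq_zero.2 (by linarith : -x ≤ 0)]
    simp
  · rw [ENNReal.toReal_ofReal (by linarith : 0 ≤ -x), ENNReal.ofReal_eq_zero.2 hx]
    simp

/-- lintegrals of suitably measurable functions agree for measures agreeing on a sub-σ-field. -/
lemma lintegral_eq_of_agree (G' : MeasurableSpace Ω) (hle : G' ≤ m0)
    {ν : @MeasureTheory.Measure Ω m0}
    (hagree : ∀ A : Set Ω, MeasurableSet[G'] A → μ A = ν A)
    {f : Ω → ENNReal} (hf : Measurable[G'] f) :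
    ∫⁻ ω, f ω ∂μ = ∫⁻ ω, f ω ∂ν := by
  have htrim : μ.trim hle = ν.trim hle :=
    MeasureTheory.Measure.ext fun s hs => by
      rw [MeasureTheory.trim_measurableSet_eq hle hs, MeasureTheory.trim_measurableSet_eq hle hs,
        hagree s hs]
  rw [← MeasureTheory.lintegral_trim hle hf, ← MeasureTheory.lintegral_trim hle hf, htrim]

lemma setLIntegral_eq_of_agree (G' : MeasurableSpace Ω) (hle : G' ≤ m0)
    {ν : @MeasureTheory.Measure Ω m0}
    (hagree : ∀ A : Set Ω, MeasurableSet[G'] A → μ A = ν A)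
    {f : Ω → ENNReal} (hf : Measurable[G'] f) {B : Set Ω} (hB : MeasurableSet[G'] B) :
    ∫⁻ ω in B, f ω ∂μ = ∫⁻ ω in B, f ω ∂ν := by
  rw [← MeasureTheory.lintegral_indicator (hle _ hB),
    ← MeasureTheory.lintegral_indicator (hle _ hB)]
  exact lintegral_eq_of_agree G' hle hagree (Measurable.indicator hf hB)

/-- the negative part of a conditional expectation is integrable. -/
lemma isCondExp_eneg_ne_top {G' : MeasurableSpace Ω} (hle : G' ≤ m0) {X Y : Ω → EReal}
    (hce : IsCondExp G' μ X Y) (hX : (∫⁻ ω, eneg (X ω) ∂μ) ≠ ⊤) :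
    (∫⁻ ω, eneg (Y ω) ∂μ) ≠ ⊤ := by
  have hB : MeasurableSet[G'] {ω | Y ω < 0} := hce.1 measurableSet_Iio
  have hBm : MeasurableSet[m0] {ω | Y ω < 0} := hle _ hB
  have h0 : (∫⁻ ω in {ω | Y ω < 0}, epos (Y ω) ∂μ) = 0 := by
    rw [MeasureTheory.setLIntegral_congr_fun_ae hBm
      (Filter.Eventually.of_forall fun ω hω => epos_of_nonpos (le_of_lt hω)),
      MeasureTheory.lintegral_zero]
  have h0' : (∫⁻ ω in {ω | Y ω < 0}ᶜ, eneg (Y ω) ∂μ) = 0 := by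
    rw [MeasureTheory.setLIntegral_congr_fun_ae hBm.compl
      (Filter.Eventually.of_forall fun ω hω => eneg_of_nonneg (not_lt.1 hω)),
      MeasureTheory.lintegral_zero]
  have heq := hce.2 _ hB
  rw [h0, zero_add] at heq
  have htot : (∫⁻ ω, eneg (Y ω) ∂μ) = ∫⁻ ω in {ω | Y ω < 0}, eneg (Y ω) ∂μ := by
    rw [← MeasureTheory.lintegral_add_compl (fun ω => eneg (Y ω)) hBm, h0', add_zero]
  rw [htot]
  refine ne_top_of_le_ne_top hX ?_
  calc (∫⁻ ω in {ω | Y ω < 0}, eneg (Y ω) ∂μ)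
      ≤ (∫⁻ ω in {ω | Y ω < 0}, epos (X ω) ∂μ) + ∫⁻ ω in {ω | Y ω < 0}, eneg (Y ω) ∂μ :=
        le_add_self
    _ = ∫⁻ ω in {ω | Y ω < 0}, eneg (X ω) ∂μ := heq.symm
    _ ≤ ∫⁻ ω, eneg (X ω) ∂μ := MeasureTheory.setLIntegral_le_lintegral _ _

lemma eInt_add_const_le {δ : ℝ} (hδ : 0 ≤ δ) (hμ : μ Set.univ ≤ 1) {g : Ω → EReal}
    (hgm : Measurable fun ω => epos (g ω))
    (hneg : (∫⁻ ω, eneg (g ω) ∂μ) ≠ ⊤) :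
    eInt μ (fun ω => g ω + (δ : EReal)) ≤ eInt μ g + ((2 * δ : ℝ) : EReal) := by
  set D := ENNReal.ofReal δ with hD
  have hDfin : D ≠ ⊤ := ENNReal.ofReal_ne_top
  set P := ∫⁻ ω, epos (g ω) ∂μ with hP
  set N := ∫⁻ ω, eneg (g ω) ∂μ with hN
  set P' := ∫⁻ ω, epos (g ω + (δ : EReal)) ∂μ with hP'
  set N' := ∫⁻ ω, eneg (g ω + (δ : EReal)) ∂μ with hN'
  have hepos_add : ∀ x : EReal, epos (x + (δ : EReal)) ≤ epos x + D := by
    intro x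
    induction x using EReal.rec with
    | bot => rw [EReal.bot_add]; simp
    | top => rw [EReal.top_add_coe]; simp
    | coe r => rw [← EReal.coe_add, epos_coe, epos_coe]; exact ENNReal.ofReal_add_le
  have heneg_le : ∀ x : EReal, eneg x ≤ eneg (x + (δ : EReal)) + D := by
    intro x
    induction x using EReal.rec with
    | bot => rw [EReal.bot_add]; simp
    | top => simp
    | coe r =>
      rw [← EReal.coe_add, eneg_coe, eneg_coe]
      calc ENNReal.ofReal (-r) = ENNReal.ofReal (-(r + δ) + δ) := by ring_nf
        _ ≤ ENNReal.ofReal (-(r + δ)) + D := ENNReal.ofReal_add_le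
  have hP'le : P' ≤ P + D := by
    calc P' ≤ ∫⁻ ω, (epos (g ω) + D) ∂μ := MeasureTheory.lintegral_mono fun ω => hepos_add _
      _ = P + D * μ Set.univ := by
          rw [MeasureTheory.lintegral_add_right _ measurable_const,
            MeasureTheory.lintegral_const]
      _ ≤ P + D := by
          exact add_le_add_right (by simpa using mul_le_mul_right hμ D) P
  have hNle : N ≤ N' + D := by
    calc N ≤ ∫⁻ ω, (eneg (g ω + (δ : EReal)) + D) ∂μ :=
          MeasureTheory.lintegral_mono fun ω => heneg_le _
      _ = N' + D * μ Set.univ := by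
          rw [MeasureTheory.lintegral_add_right _ measurable_const,
            MeasureTheory.lintegral_const]
      _ ≤ N' + D := add_le_add_right (by simpa using mul_le_mul_right hμ D) N'
  have hN'le : N' ≤ N :=
    MeasureTheory.lintegral_mono fun ω =>
      antitone_eneg (le_add_of_nonneg_right (by exact_mod_cast hδ))
  have hN'fin : N' ≠ ⊤ := ne_top_of_le_ne_top hneg hN'le
  show (P' : EReal) - N' ≤ ((P : EReal) - N) + ((2 * δ : ℝ) : EReal)
  by_cases hPtop : P = ⊤
  · rw [hPtop, EReal.coe_ennreal_top, coe_ennreal_eq_real hneg, EReal.top_sub_coe,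
      EReal.top_add_coe]
    exact le_top
  have hP'fin : P' ≠ ⊤ := ne_top_of_le_ne_top (ENNReal.add_ne_top.2 ⟨hPtop, hDfin⟩) hP'le
  rw [coe_ennreal_eq_real hP'fin, coe_ennreal_eq_real hN'fin, coe_ennreal_eq_real hPtop,
    coe_ennreal_eq_real hneg, ← EReal.coe_sub, ← EReal.coe_sub, ← EReal.coe_add,
    EReal.coe_le_coe_iff]
  have h1 : P'.toReal ≤ P.toReal + D.toReal := by
    rw [← ENNReal.toReal_add hPtop hDfin]
    exact ENNReal.toReal_mono (ENNReal.add_ne_top.2 ⟨hPtop, hDfin⟩) hP'le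
  have h2 : N.toReal ≤ N'.toReal + D.toReal := by
    rw [← ENNReal.toReal_add hN'fin hDfin]
    exact ENNReal.toReal_mono (ENNReal.add_ne_top.2 ⟨hN'fin, hDfin⟩) hNle
  have h3 : D.toReal = δ := ENNReal.toReal_ofReal hδ
  linarith

end EIntHelpers
section StoppingHelpers

variable [LinearOrder T]

/-- the set `{τ < σ}` is measurable for the supremum σ-field. -/
lemma meas_lt_sup {G : T → MeasurableSpace Ω} {σ τ : Ω → WithTop T}
    (hσ : ∀ t : T, MeasurableSet[G t] {ω | σ ω ≤ (t : WithTop T)})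
    (hτ : ∀ t : T, MeasurableSet[G t] {ω | τ ω ≤ (t : WithTop T)})
    {Dset : Set T} (hDc : Dset.Countable)
    (hDd : ∀ a b : WithTop T, a < b → ∃ q ∈ Dset, a ≤ (q : WithTop T) ∧ (q : WithTop T) < b) :
    MeasurableSet[⨆ t, G t] {ω | τ ω < σ ω} := by
  have hset : {ω | τ ω < σ ω} =
      ⋃ q ∈ Dset, ({ω | τ ω ≤ (q : WithTop T)} ∩ {ω | σ ω ≤ (q : WithTop T)}ᶜ) := by
    ext ω
    simp only [Set.mem_setOf_eq, Set.mem_iUnion, Set.mem_inter_iff, Set.mem_compl_iff,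
      Set.mem_setOf_eq, exists_prop]
    constructor
    · intro h
      obtain ⟨q, hq, h1, h2⟩ := hDd _ _ h
      exact ⟨q, hq, h1, fun h3 => absurd (h3.trans_lt h2) (lt_irrefl _)⟩
    · rintro ⟨q, _, h1, h2⟩
      exact h1.trans_lt (lt_of_not_ge h2)
  rw [hset]
  refine MeasurableSet.biUnion hDc fun q _ => ?_
  exact ((le_iSup G q) _ (hτ q)).inter ((le_iSup G q) _ (hσ q)).compl

/-- `{τ < σ} ∩ {τ ≤ u}` is `G u`-measurable. -/
lemma meas_lt_inter_le_tau {G : T → MeasurableSpace Ω} (hG : Monotone G)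
    {σ τ : Ω → WithTop T}
    (hσ : ∀ t : T, MeasurableSet[G t] {ω | σ ω ≤ (t : WithTop T)})
    (hτ : ∀ t : T, MeasurableSet[G t] {ω | τ ω ≤ (t : WithTop T)})
    {Dset : Set T} (hDc : Dset.Countable)
    (hDd : ∀ a b : WithTop T, a < b → ∃ q ∈ Dset, a ≤ (q : WithTop T) ∧ (q : WithTop T) < b)
    (u : T) :
    MeasurableSet[G u] ({ω | τ ω < σ ω} ∩ {ω | τ ω ≤ (u : WithTop T)}) := by
  have hset : {ω | τ ω < σ ω} ∩ {ω | τ ω ≤ (u : WithTop T)} =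
      (⋃ q ∈ Dset ∩ Set.Iic u,
        ({ω | τ ω ≤ (q : WithTop T)} ∩ {ω | σ ω ≤ (q : WithTop T)}ᶜ)) ∪
      ({ω | τ ω ≤ (u : WithTop T)} ∩ {ω | σ ω ≤ (u : WithTop T)}ᶜ) := by
    ext ω
    simp only [Set.mem_inter_iff, Set.mem_setOf_eq, Set.mem_union, Set.mem_iUnion,
      Set.mem_compl_iff, Set.mem_Iic, exists_prop]
    constructor
    · rintro ⟨hlt, hu⟩
      by_cases hσu : σ ω ≤ (u : WithTop T)
      · obtain ⟨q, hq, h1, h2⟩ := hDd _ _ hlt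
        have hqu : q ≤ u := by
          have h4 : (q : WithTop T) < (u : WithTop T) := h2.trans_le hσu
          exact_mod_cast h4.le
        exact Or.inl ⟨q, ⟨hq, hqu⟩, h1, fun h3 => absurd (h3.trans_lt h2) (lt_irrefl _)⟩
      · exact Or.inr ⟨hu, hσu⟩
    · rintro (⟨q, ⟨_, hqu⟩, h1, h2⟩ | ⟨h1, h2⟩)
      · refine ⟨h1.trans_lt (lt_of_not_ge h2), h1.trans ?_⟩
        exact_mod_cast hqu
      · exact ⟨h1.trans_lt (lt_of_not_ge h2), h1⟩
  rw [hset]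
  refine MeasurableSet.union ?_ ((hτ u).inter (hσ u).compl)
  refine MeasurableSet.biUnion (hDc.mono Set.inter_subset_left) fun q hq => ?_
  exact (hG hq.2) _ ((hτ q).inter (hσ q).compl)

/-- `{τ < σ} ∩ {σ ≤ u}` is `G u`-measurable. -/
lemma meas_lt_inter_le_sigma {G : T → MeasurableSpace Ω} (hG : Monotone G)
    {σ τ : Ω → WithTop T}
    (hσ : ∀ t : T, MeasurableSet[G t] {ω | σ ω ≤ (t : WithTop T)})
    (hτ : ∀ t : T, MeasurableSet[G t] {ω | τ ω ≤ (t : WithTop T)})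
    {Dset : Set T} (hDc : Dset.Countable)
    (hDd : ∀ a b : WithTop T, a < b → ∃ q ∈ Dset, a ≤ (q : WithTop T) ∧ (q : WithTop T) < b)
    (u : T) :
    MeasurableSet[G u] ({ω | τ ω < σ ω} ∩ {ω | σ ω ≤ (u : WithTop T)}) := by
  have hset : {ω | τ ω < σ ω} ∩ {ω | σ ω ≤ (u : WithTop T)} =
      ⋃ q ∈ Dset ∩ Set.Iic u,
        ({ω | τ ω ≤ (q : WithTop T)} ∩ {ω | σ ω ≤ (q : WithTop T)}ᶜ
          ∩ {ω | σ ω ≤ (u : WithTop T)}) := by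
    ext ω
    simp only [Set.mem_inter_iff, Set.mem_setOf_eq, Set.mem_iUnion, Set.mem_compl_iff,
      Set.mem_Iic, exists_prop]
    constructor
    · rintro ⟨hlt, hu⟩
      obtain ⟨q, hq, h1, h2⟩ := hDd _ _ hlt
      have hqu : q ≤ u := by
        have h4 : (q : WithTop T) < (u : WithTop T) := h2.trans_le hu
        exact_mod_cast h4.le
      exact ⟨q, ⟨hq, hqu⟩, ⟨h1, fun h3 => absurd (h3.trans_lt h2) (lt_irrefl _)⟩, hu⟩
    · rintro ⟨q, ⟨_, _⟩, ⟨h1, h2⟩, h3⟩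
      exact ⟨h1.trans_lt (lt_of_not_ge h2), h3⟩
  rw [hset]
  refine MeasurableSet.biUnion (hDc.mono Set.inter_subset_left) fun q hq => ?_
  exact ((hG hq.2) _ ((hτ q).inter (hσ q).compl)).inter (hσ u)

/-- the event `{σ ≤ τ}` belongs to the σ-field at time `σ`. -/
lemma le_event_mem_sigma {G : T → MeasurableSpace Ω} (hG : Monotone G)
    {σ τ : Ω → WithTop T}
    (hσ : ∀ t : T, MeasurableSet[G t] {ω | σ ω ≤ (t : WithTop T)})
    (hτ : ∀ t : T, MeasurableSet[G t] {ω | τ ω ≤ (t : WithTop T)})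
    {Dset : Set T} (hDc : Dset.Countable)
    (hDd : ∀ a b : WithTop T, a < b → ∃ q ∈ Dset, a ≤ (q : WithTop T) ∧ (q : WithTop T) < b) :
    MeasurableSet[sigmaAtTime G σ hσ] {ω | ¬ τ ω < σ ω} := by
  refine ⟨(meas_lt_sup hσ hτ hDc hDd).compl, fun u => ?_⟩
  have hset : {ω | ¬ τ ω < σ ω} ∩ {ω | σ ω ≤ (u : WithTop T)} =
      {ω | σ ω ≤ (u : WithTop T)} \ ({ω | τ ω < σ ω} ∩ {ω | σ ω ≤ (u : WithTop T)}) := by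
    ext ω
    simp only [Set.mem_inter_iff, Set.mem_setOf_eq, Set.mem_diff, Set.mem_inter_iff]
    tauto
  rw [hset]
  exact (hσ u).diff (meas_lt_inter_le_sigma hG hσ hτ hDc hDd u)

/-- a set in the σ-field at `σ`, intersected with `{σ ≤ τ}`, is in the σ-field at `τ`. -/
lemma mem_tau_of_mem_sigma {G : T → MeasurableSpace Ω} (hG : Monotone G)
    {σ τ : Ω → WithTop T}
    (hσ : ∀ t : T, MeasurableSet[G t] {ω | σ ω ≤ (t : WithTop T)})
    (hτ : ∀ t : T, MeasurableSet[G t] {ω | τ ω ≤ (t : WithTop T)})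
    {Dset : Set T} (hDc : Dset.Countable)
    (hDd : ∀ a b : WithTop T, a < b → ∃ q ∈ Dset, a ≤ (q : WithTop T) ∧ (q : WithTop T) < b)
    {A : Set Ω} (hA : MeasurableSet[sigmaAtTime G σ hσ] A) :
    MeasurableSet[sigmaAtTime G τ hτ] (A ∩ {ω | ¬ τ ω < σ ω}) := by
  refine ⟨hA.1.inter (meas_lt_sup hσ hτ hDc hDd).compl, fun u => ?_⟩
  have hset : (A ∩ {ω | ¬ τ ω < σ ω}) ∩ {ω | τ ω ≤ (u : WithTop T)} =
      (A ∩ {ω | σ ω ≤ (u : WithTop T)}) ∩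
        ({ω | ¬ τ ω < σ ω} ∩ {ω | τ ω ≤ (u : WithTop T)}) := by
    ext ω
    simp only [Set.mem_inter_iff, Set.mem_setOf_eq]
    constructor
    · rintro ⟨⟨hA', hK⟩, hu⟩
      exact ⟨⟨hA', (not_lt.1 hK).trans hu⟩, hK, hu⟩
    · rintro ⟨⟨hA', _⟩, hK, hu⟩
      exact ⟨⟨hA', hK⟩, hu⟩
  rw [hset]
  refine (hA.2 u).inter ?_
  have hset2 : {ω | ¬ τ ω < σ ω} ∩ {ω | τ ω ≤ (u : WithTop T)} =
      {ω | τ ω ≤ (u : WithTop T)} \ ({ω | τ ω < σ ω} ∩ {ω | τ ω ≤ (u : WithTop T)}) := by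
    ext ω
    simp only [Set.mem_inter_iff, Set.mem_setOf_eq, Set.mem_diff, Set.mem_inter_iff]
    tauto
  rw [hset2]
  exact (hτ u).diff (meas_lt_inter_le_tau hG hσ hτ hDc hDd u)

lemma sigmaAtTime_le_iSup {G : T → MeasurableSpace Ω} {σ : Ω → WithTop T}
    (hσ : ∀ t : T, MeasurableSet[G t] {ω | σ ω ≤ (t : WithTop T)}) :
    sigmaAtTime G σ hσ ≤ ⨆ t, G t := fun _ hs => hs.1

/-- a countable "dense" subset of the time axis. -/
lemma exists_countable_dense_timeset
    (hT : Nonempty (T ≃o ℕ) ∨ Nonempty (T ≃o NNReal)) :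
    ∃ Dset : Set T, Dset.Countable ∧
      ∀ a b : WithTop T, a < b → ∃ q ∈ Dset, a ≤ (q : WithTop T) ∧ (q : WithTop T) < b := by
  rcases hT with ⟨⟨e⟩⟩ | ⟨⟨e⟩⟩
  · have : Countable T := Countable.of_equiv ℕ e.symm.toEquiv
    refine ⟨Set.univ, Set.countable_univ, fun a b hab => ?_⟩
    lift a to T using (hab.trans_le le_top).ne
    exact ⟨a, Set.mem_univ a, le_rfl, hab⟩
  · refine ⟨Set.range (fun q : ℚ => e.symm (Real.toNNReal q)), Set.countable_range _,
      fun a b hab => ?_⟩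
    lift a to T using (hab.trans_le le_top).ne
    rcases b with _ | b
    · obtain ⟨q, hq⟩ := exists_rat_gt ((e a : NNReal) : ℝ)
      refine ⟨e.symm (Real.toNNReal q), Set.mem_range_self q, ?_, ?_⟩
      · rw [WithTop.coe_le_coe, ← e.le_iff_le, e.apply_symm_apply]
        exact (Real.le_toNNReal_iff_coe_le
          (le_trans (e a).coe_nonneg hq.le)).2 hq.le
      · exact WithTop.coe_lt_top _
    · have hab' : a < b := WithTop.coe_lt_coe.1 hab
      have hlt : ((e a : NNReal) : ℝ) < ((e b : NNReal) : ℝ) := by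
        exact_mod_cast e.lt_iff_lt.2 hab'
      obtain ⟨q, hq1, hq2⟩ := exists_rat_btwn hlt
      have hq0 : (0:ℝ) ≤ (q:ℝ) := le_trans (e a).coe_nonneg hq1.le
      refine ⟨e.symm (Real.toNNReal q), Set.mem_range_self q, ?_, ?_⟩
      · rw [WithTop.coe_le_coe, ← e.le_iff_le, e.apply_symm_apply]
        exact (Real.le_toNNReal_iff_coe_le hq0).2 hq1.le
      · have : (e.symm (Real.toNNReal q)) < b := by
          rw [← e.lt_iff_lt, e.apply_symm_apply]
          exact (Real.toNNReal_lt_iff_lt_coe hq0).2 hq2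
        exact WithTop.coe_lt_coe.2 this

end StoppingHelpers
section EssSupApprox

open MeasureTheory
open scoped ENNReal NNReal

/-- a measurable countable "essential-supremum attaining" subfamily. -/
lemma exists_countable_approx {m0 : MeasurableSpace Ω} (μ : @Measure Ω m0)
    [IsFiniteMeasure μ] {ι : Type*} [Nonempty ι] (f : ι → Ω → EReal)
    (hf : ∀ i, Measurable[m0] (f i)) :
    ∃ d : ℕ → ι, ∀ i, ∀ᵐ ω ∂μ, f i ω ≤ ⨆ n, f (d n) ω := by
  classical
  set sA : ℚ → ℝ≥0∞ := fun t => ⨆ g : ℕ → ι, μ (⋃ n, {ω | ((t:ℝ):EReal) < f (g n) ω}) with hsA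
  have hsA_fin : ∀ t, sA t ≠ ⊤ := by
    intro t
    refine ne_top_of_le_ne_top (measure_ne_top μ Set.univ) (iSup_le fun g => measure_mono ?_)
    exact Set.subset_univ _
  have hchoice : ∀ (t : ℚ) (k : ℕ), ∃ g : ℕ → ι,
      sA t ≤ μ (⋃ n, {ω | ((t:ℝ):EReal) < f (g n) ω}) + ((k:ℝ≥0∞)+1)⁻¹ := by
    intro t k
    by_cases h0 : sA t = 0
    · exact ⟨fun _ => Classical.arbitrary ι, by rw [h0]; exact zero_le⟩
    have hlt : sA t - ((k:ℝ≥0∞)+1)⁻¹ < sA t :=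
      ENNReal.sub_lt_self (hsA_fin t) h0 (by simp)
    rw [hsA, lt_iSup_iff] at hlt
    obtain ⟨g, hg⟩ := hlt
    exact ⟨g, tsub_le_iff_right.1 hg.le⟩
  choose gg hgg using hchoice
  set E := Denumerable.eqv (ℚ × ℕ × ℕ) with hE
  set d : ℕ → ι := fun n => gg (E.symm n).1 (E.symm n).2.1 (E.symm n).2.2 with hd
  refine ⟨d, fun i => ?_⟩
  set U : Ω → EReal := fun ω => ⨆ n, f (d n) ω with hU
  have hmeasA : ∀ (t : ℚ) (j : ι), MeasurableSet[m0] {ω | ((t:ℝ):EReal) < f j ω} :=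
    fun t j => (hf j) measurableSet_Ioi
  have hnull : ∀ t : ℚ,
      μ ({ω | ((t:ℝ):EReal) < f i ω} \ (⋃ n, {ω | ((t:ℝ):EReal) < f (d n) ω})) = 0 := by
    intro t
    set A := ⋃ n, {ω | ((t:ℝ):EReal) < f (d n) ω} with hA
    have hAmeas : MeasurableSet[m0] A := MeasurableSet.iUnion fun n => hmeasA t _
    have hAge : sA t ≤ μ A := by
      refine ENNReal.le_of_forall_pos_le_add fun ε hε hfin => ?_
      obtain ⟨k, hk⟩ := ENNReal.exists_inv_nat_lt (by exact_mod_cast hε.ne' : (ε:ℝ≥0∞) ≠ 0)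
      calc sA t ≤ μ (⋃ n, {ω | ((t:ℝ):EReal) < f (gg t k n) ω}) + ((k:ℝ≥0∞)+1)⁻¹ := hgg t k
        _ ≤ μ A + (ε:ℝ≥0∞) := by
            refine add_le_add (measure_mono (Set.iUnion_subset fun n => ?_)) ?_
            · intro ω hω
              refine Set.mem_iUnion.2 ⟨E (t, k, n), ?_⟩
              simp only [hd, Equiv.symm_apply_apply]
              exact hω
            · refine le_trans (ENNReal.inv_le_inv' ?_) hk.le
              exact le_add_right le_rfl
    have hup : μ (A ∪ {ω | ((t:ℝ):EReal) < f i ω}) ≤ sA t := by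
      set g' : ℕ → ι := fun n => Nat.casesOn n i (fun m => d m) with hg'
      have hU' : (⋃ n, {ω | ((t:ℝ):EReal) < f (g' n) ω}) =
          A ∪ {ω | ((t:ℝ):EReal) < f i ω} := by
        ext ω
        simp only [Set.mem_iUnion, Set.mem_union, Set.mem_setOf_eq, hA]
        constructor
        · rintro ⟨n, hn⟩
          cases n with
          | zero => exact Or.inr hn
          | succ m => exact Or.inl ⟨m, hn⟩
        · rintro (⟨m, hm⟩ | h)
          · exact ⟨m + 1, hm⟩
          · exact ⟨0, h⟩
      rw [← hU']
      exact le_iSup (fun g => μ (⋃ n, {ω | ((t:ℝ):EReal) < f (g n) ω})) g'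
    have hle : μ A + μ ({ω | ((t:ℝ):EReal) < f i ω} \ A) ≤ μ A := by
      rw [← measure_union (disjoint_sdiff_self_right) ((hmeasA t i).diff hAmeas),
        Set.union_diff_self]
      exact hup.trans hAge
    have := (ENNReal.add_le_add_iff_left (measure_ne_top μ A)).1
      (by simpa using hle : μ A + μ _ ≤ μ A + 0)
    simpa using this
  have hsub : {ω | ¬ f i ω ≤ U ω} ⊆
      ⋃ t : ℚ, ({ω | ((t:ℝ):EReal) < f i ω} \ (⋃ n, {ω | ((t:ℝ):EReal) < f (d n) ω})) := by
    intro ω hω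
    simp only [Set.mem_setOf_eq, not_le] at hω
    obtain ⟨t, ht1, ht2⟩ := EReal.exists_rat_btwn_of_lt hω
    refine Set.mem_iUnion.2 ⟨t, ht2, fun hmem => ?_⟩
    obtain ⟨n, hn⟩ := Set.mem_iUnion.1 hmem
    have : ((t:ℝ):EReal) < U ω := lt_of_lt_of_le hn (le_iSup (fun n => f (d n) ω) n)
    exact absurd ht1 (not_lt.2 this.le)
  refine (MeasureTheory.ae_iff).2 (measure_mono_null hsub ?_)
  exact MeasureTheory.measure_iUnion_null fun t => hnull t

end EssSupApprox
section MoreHelpers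

lemma ereal_neg_iSup {ι : Type*} (u : ι → EReal) : -(⨆ i, u i) = ⨅ i, -(u i) := by
  refine le_antisymm (le_iInf fun i => EReal.neg_le_neg_iff.2 (le_iSup u i)) ?_
  have h : (⨆ i, u i) ≤ -(⨅ i, -(u i)) := by
    refine iSup_le fun i => ?_
    rw [← neg_neg (u i)]
    exact EReal.neg_le_neg_iff.2 (iInf_le (fun i => -(u i)) i)
  rw [← neg_neg (⨅ i, -u i)]
  exact EReal.neg_le_neg_iff.2 h

lemma enn_sub_le_of {x X nU nM : ENNReal} {ρ η : ℝ} (hnU : nU ≠ ⊤) (hnM : nM ≠ ⊤)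
    (hx : x ≤ X) (hn : nM ≤ nU + ENNReal.ofReal η) (hη : 0 ≤ η)
    (h : (X : EReal) - (nM : EReal) ≤ ((ρ : ℝ) : EReal)) :
    (x : EReal) - (nU : EReal) ≤ ((ρ + η : ℝ) : EReal) := by
  have hXfin : X ≠ ⊤ := by
    intro hX
    rw [hX, EReal.coe_ennreal_top, coe_ennreal_eq_real hnM, EReal.top_sub_coe] at h
    exact absurd h (by simp)
  have hxfin : x ≠ ⊤ := ne_top_of_le_ne_top hXfin hx
  rw [coe_ennreal_eq_real hxfin, coe_ennreal_eq_real hnU, ← EReal.coe_sub, EReal.coe_le_coe_iff]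
  rw [coe_ennreal_eq_real hXfin, coe_ennreal_eq_real hnM, ← EReal.coe_sub,
    EReal.coe_le_coe_iff] at h
  have h1 : x.toReal ≤ X.toReal := ENNReal.toReal_mono hXfin hx
  have h2 : nM.toReal ≤ nU.toReal + η := by
    have := ENNReal.toReal_mono (ENNReal.add_ne_top.2 ⟨hnU, ENNReal.ofReal_ne_top⟩) hn
    rwa [ENNReal.toReal_add hnU ENNReal.ofReal_ne_top, ENNReal.toReal_ofReal hη] at this
  linarith

lemma ereal_iSup_min_natCast (x : EReal) :
    (⨆ n : ℕ, min ((((n : ℝ) + 1 : ℝ)) : EReal) x) = x := by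
  refine le_antisymm (iSup_le fun n => min_le_right _ _) ?_
  by_cases hx : x = ⊤
  · subst hx
    rw [top_le_iff, iSup_eq_top]
    intro b hb
    obtain ⟨q, hq1, _⟩ := EReal.exists_rat_btwn_of_lt hb
    refine ⟨⌈(q : ℝ)⌉₊, lt_of_lt_of_le hq1 ?_⟩
    rw [min_eq_left le_top, EReal.coe_le_coe_iff]
    exact le_trans (Nat.le_ceil _) (by linarith [Nat.le_ceil (q:ℝ)] <;> norm_num)
  · have hn : ∃ n : ℕ, x ≤ (((n : ℝ) + 1 : ℝ) : EReal) := by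
      by_cases hb : x = ⊥
      · exact ⟨0, hb ▸ bot_le⟩
      · refine ⟨⌈x.toReal⌉₊, ?_⟩
        conv_lhs => rw [← EReal.coe_toReal hx hb]
        rw [EReal.coe_le_coe_iff]
        linarith [Nat.le_ceil x.toReal]
    obtain ⟨n, hn⟩ := hn
    exact le_iSup_of_le n (le_of_eq (min_eq_right hn).symm)

lemma ereal_min_add_le (Mx x : EReal) {δ : ℝ} (hδ : 0 ≤ δ) :
    min Mx (x + (δ : EReal)) ≤ min Mx x + (δ : EReal) := by
  rcases le_total Mx x with h | h
  · refine le_trans (min_le_left _ _) ?_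
    rw [min_eq_left h]
    exact le_add_of_nonneg_right (by exact_mod_cast hδ)
  · rw [min_eq_right h]
    exact min_le_right _ _

lemma ereal_max_add_le (x y : EReal) {δ : ℝ} (hδ : 0 ≤ δ) :
    max (x + (δ : EReal)) y ≤ max x y + (δ : EReal) := by
  refine max_le (add_le_add_left (le_max_left x y) _) ?_
  exact le_trans (le_max_right x y) (le_add_of_nonneg_right (by exact_mod_cast hδ))

end MoreHelpers
section Tower

variable [LinearOrder T] [OrderBot T]

lemma ccs_sigma_le (𝒮 : CCS Ω C T) (d : C) (S : C → Ω → WithTop T) (hS : S ∈ 𝒮.CT) :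
    sigmaAtTime (𝒮.G d) (S d) (𝒮.hCT S hS d) ≤ 𝒮.m :=
  le_trans (sigmaAtTime_le_iSup _) (le_trans (𝒮.hGF d) (𝒮.hF d))

/-- tower property and change of measure for a control `e ∈ D(c,T')` with `e ∈ D(c,S)`:
the conditional payoffs at `S` and `T'` have the same `P^c`-integral on a set `B`
lying in both stopped σ-fields, and their negative parts are integrable. -/
lemma tower_bound (𝒮 : CCS Ω C T)
    (Jc : C → (C → Ω → WithTop T) → Ω → EReal)
    (hJc : ∀ d, ∀ S, ∀ hS : S ∈ 𝒮.CT,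
      IsCondExp (sigmaAtTime (𝒮.G d) (S d) (𝒮.hCT S hS d)) (𝒮.P d) (𝒮.J d) (Jc d S))
    (c : C) (S T' : C → Ω → WithTop T) (hS : S ∈ 𝒮.CT) (hT' : T' ∈ 𝒮.CT)
    (e : C) (heT : e ∈ 𝒮.D c T') (heS : e ∈ 𝒮.D c S)
    {B : Set Ω} (hBS : MeasurableSet[sigmaAtTime (𝒮.G c) (S c) (𝒮.hCT S hS c)] B)
    (hBT : MeasurableSet[sigmaAtTime (𝒮.G c) (T' c) (𝒮.hCT T' hT' c)] B) :
    eInt ((𝒮.P c).restrict B) (Jc e T') = eInt ((𝒮.P c).restrict B) (Jc e S) ∧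
    (∫⁻ ω in B, eneg (Jc e T' ω) ∂(𝒮.P c)) ≠ ⊤ ∧
    (∫⁻ ω in B, eneg (Jc e S ω) ∂(𝒮.P c)) ≠ ⊤ := by
  have hGT := 𝒮.hStableG c e T' hT' heT
  have hGS := 𝒮.hStableG c e S hS heS
  have hmT : sigmaAtTime (𝒮.G c) (T' c) (𝒮.hCT T' hT' c) ≤ 𝒮.m := ccs_sigma_le 𝒮 c T' hT'
  have hmS : sigmaAtTime (𝒮.G c) (S c) (𝒮.hCT S hS c) ≤ 𝒮.m := ccs_sigma_le 𝒮 c S hS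
  have hmTe : sigmaAtTime (𝒮.G e) (T' e) (𝒮.hCT T' hT' e) ≤ 𝒮.m := ccs_sigma_le 𝒮 e T' hT'
  have hmSe : sigmaAtTime (𝒮.G e) (S e) (𝒮.hCT S hS e) ≤ 𝒮.m := ccs_sigma_le 𝒮 e S hS
  -- measurabilities relative to the stopped σ-fields of `c`
  have mJT : Measurable[sigmaAtTime (𝒮.G c) (T' c) (𝒮.hCT T' hT' c)] (Jc e T') :=
    hGT.symm ▸ (hJc e T' hT').1
  have mJS : Measurable[sigmaAtTime (𝒮.G c) (S c) (𝒮.hCT S hS c)] (Jc e S) :=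
    hGS.symm ▸ (hJc e S hS).1
  have hBTe : MeasurableSet[sigmaAtTime (𝒮.G e) (T' e) (𝒮.hCT T' hT' e)] B := hGT ▸ hBT
  have hBSe : MeasurableSet[sigmaAtTime (𝒮.G e) (S e) (𝒮.hCT S hS e)] B := hGS ▸ hBS
  -- agreement of laws
  have agreeT : ∀ A : Set Ω, MeasurableSet[sigmaAtTime (𝒮.G c) (T' c) (𝒮.hCT T' hT' c)] A →
      𝒮.P c A = 𝒮.P e A := fun A hA => 𝒮.hStableP c e T' hT' heT A hA
  have agreeS : ∀ A : Set Ω, MeasurableSet[sigmaAtTime (𝒮.G c) (S c) (𝒮.hCT S hS c)] A →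
      𝒮.P c A = 𝒮.P e A := fun A hA => 𝒮.hStableP c e S hS heS A hA
  -- global integrability of negative parts under `P e`
  have negJ : (∫⁻ ω, eneg (𝒮.J e ω) ∂(𝒮.P e)) ≠ ⊤ := (𝒮.hJneg e).ne
  have negTtot : (∫⁻ ω, eneg (Jc e T' ω) ∂(𝒮.P e)) ≠ ⊤ :=
    isCondExp_eneg_ne_top hmTe (hJc e T' hT') negJ
  have negStot : (∫⁻ ω, eneg (Jc e S ω) ∂(𝒮.P e)) ≠ ⊤ :=
    isCondExp_eneg_ne_top hmSe (hJc e S hS) negJ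
  have negT : (∫⁻ ω in B, eneg (Jc e T' ω) ∂(𝒮.P e)) ≠ ⊤ :=
    ne_top_of_le_ne_top negTtot (MeasureTheory.setLIntegral_le_lintegral _ _)
  have negS : (∫⁻ ω in B, eneg (Jc e S ω) ∂(𝒮.P e)) ≠ ⊤ :=
    ne_top_of_le_ne_top negStot (MeasureTheory.setLIntegral_le_lintegral _ _)
  have negJB : (∫⁻ ω in B, eneg (𝒮.J e ω) ∂(𝒮.P e)) ≠ ⊤ :=
    ne_top_of_le_ne_top negJ (MeasureTheory.setLIntegral_le_lintegral _ _)
  -- the two conditional expectation identities under `P e`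
  have eqT := (hJc e T' hT').2 B hBTe
  have eqS := (hJc e S hS).2 B hBSe
  -- cancellation
  have hcomb : (∫⁻ ω in B, epos (Jc e T' ω) ∂(𝒮.P e)) + (∫⁻ ω in B, eneg (Jc e S ω) ∂(𝒮.P e))
      = (∫⁻ ω in B, epos (Jc e S ω) ∂(𝒮.P e)) + (∫⁻ ω in B, eneg (Jc e T' ω) ∂(𝒮.P e)) := by
    have h1 : (∫⁻ ω in B, eneg (𝒮.J e ω) ∂(𝒮.P e)) +
        ((∫⁻ ω in B, epos (Jc e T' ω) ∂(𝒮.P e)) + (∫⁻ ω in B, eneg (Jc e S ω) ∂(𝒮.P e)))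
        = (∫⁻ ω in B, eneg (𝒮.J e ω) ∂(𝒮.P e)) +
        ((∫⁻ ω in B, epos (Jc e S ω) ∂(𝒮.P e)) + (∫⁻ ω in B, eneg (Jc e T' ω) ∂(𝒮.P e))) := by
      calc (∫⁻ ω in B, eneg (𝒮.J e ω) ∂(𝒮.P e)) +
          ((∫⁻ ω in B, epos (Jc e T' ω) ∂(𝒮.P e)) + (∫⁻ ω in B, eneg (Jc e S ω) ∂(𝒮.P e)))
          = ((∫⁻ ω in B, epos (Jc e T' ω) ∂(𝒮.P e)) + (∫⁻ ω in B, eneg (𝒮.J e ω) ∂(𝒮.P e)))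
            + (∫⁻ ω in B, eneg (Jc e S ω) ∂(𝒮.P e)) := by ring
        _ = ((∫⁻ ω in B, epos (𝒮.J e ω) ∂(𝒮.P e)) + (∫⁻ ω in B, eneg (Jc e T' ω) ∂(𝒮.P e)))
            + (∫⁻ ω in B, eneg (Jc e S ω) ∂(𝒮.P e)) := by rw [eqT]
        _ = ((∫⁻ ω in B, epos (𝒮.J e ω) ∂(𝒮.P e)) + (∫⁻ ω in B, eneg (Jc e S ω) ∂(𝒮.P e)))
            + (∫⁻ ω in B, eneg (Jc e T' ω) ∂(𝒮.P e)) := by ring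
        _ = ((∫⁻ ω in B, epos (Jc e S ω) ∂(𝒮.P e)) + (∫⁻ ω in B, eneg (𝒮.J e ω) ∂(𝒮.P e)))
            + (∫⁻ ω in B, eneg (Jc e T' ω) ∂(𝒮.P e)) := by rw [eqS]
        _ = (∫⁻ ω in B, eneg (𝒮.J e ω) ∂(𝒮.P e)) +
            ((∫⁻ ω in B, epos (Jc e S ω) ∂(𝒮.P e)) + (∫⁻ ω in B, eneg (Jc e T' ω) ∂(𝒮.P e))) := by
            ring
    exact (ENNReal.add_right_inj negJB).1 h1
  -- equality of the `eInt`s under `P e`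
  have htowerPe : eInt ((𝒮.P e).restrict B) (Jc e T') = eInt ((𝒮.P e).restrict B) (Jc e S) :=
    ereal_sub_eq_sub negT negS hcomb
  -- change of measure for each of the four integrals
  have hmc_posT : (∫⁻ ω in B, epos (Jc e T' ω) ∂(𝒮.P c)) = ∫⁻ ω in B, epos (Jc e T' ω) ∂(𝒮.P e) :=
    setLIntegral_eq_of_agree _ hmT agreeT (measurable_epos.comp mJT) hBT
  have hmc_negT : (∫⁻ ω in B, eneg (Jc e T' ω) ∂(𝒮.P c)) = ∫⁻ ω in B, eneg (Jc e T' ω) ∂(𝒮.P e) :=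
    setLIntegral_eq_of_agree _ hmT agreeT (measurable_eneg.comp mJT) hBT
  have hmc_posS : (∫⁻ ω in B, epos (Jc e S ω) ∂(𝒮.P c)) = ∫⁻ ω in B, epos (Jc e S ω) ∂(𝒮.P e) :=
    setLIntegral_eq_of_agree _ hmS agreeS (measurable_epos.comp mJS) hBS
  have hmc_negS : (∫⁻ ω in B, eneg (Jc e S ω) ∂(𝒮.P c)) = ∫⁻ ω in B, eneg (Jc e S ω) ∂(𝒮.P e) :=
    setLIntegral_eq_of_agree _ hmS agreeS (measurable_eneg.comp mJS) hBS
  refine ⟨?_, ?_, ?_⟩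
  · rw [eInt, eInt]
    rw [show (∫⁻ ω, epos (Jc e T' ω) ∂((𝒮.P c).restrict B)) = ∫⁻ ω in B, epos (Jc e T' ω) ∂(𝒮.P c)
        from rfl,
      show (∫⁻ ω, eneg (Jc e T' ω) ∂((𝒮.P c).restrict B)) = ∫⁻ ω in B, eneg (Jc e T' ω) ∂(𝒮.P c)
        from rfl,
      show (∫⁻ ω, epos (Jc e S ω) ∂((𝒮.P c).restrict B)) = ∫⁻ ω in B, epos (Jc e S ω) ∂(𝒮.P c)
        from rfl,
      show (∫⁻ ω, eneg (Jc e S ω) ∂((𝒮.P c).restrict B)) = ∫⁻ ω in B, eneg (Jc e S ω) ∂(𝒮.P c)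
        from rfl,
      hmc_posT, hmc_negT, hmc_posS, hmc_negS]
    exact htowerPe
  · rw [hmc_negT]; exact negT
  · rw [hmc_negS]; exact negS

end Tower
section KeyLemma

variable [LinearOrder T] [OrderBot T]

lemma key_zero
    (hT : Nonempty (T ≃o ℕ) ∨ Nonempty (T ≃o NNReal))
    (𝒮 : CCS Ω C T)
    (Jc : C → (C → Ω → WithTop T) → Ω → EReal)
    (hJc : ∀ d, ∀ S, ∀ hS : S ∈ 𝒮.CT,
      IsCondExp (sigmaAtTime (𝒮.G d) (S d) (𝒮.hCT S hS d)) (𝒮.P d) (𝒮.J d) (Jc d S))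
    (hlat : ∀ c, ∀ S ∈ 𝒮.CT, ∀ ε : ℝ, 0 < ε → ∀ M : ℝ, 0 < M →
      ∀ d ∈ 𝒮.D c S, ∀ d' ∈ 𝒮.D c S, ∃ d'' ∈ 𝒮.D c S,
        ∀ᵐ ω ∂𝒮.P c,
          ((M : EReal) ⊓ Jc d S ω) ⊔ ((M : EReal) ⊓ Jc d' S ω) - (ε : EReal) ≤ Jc d'' S ω)
    (c : C) (S T' : C → Ω → WithTop T) (hS : S ∈ 𝒮.CT) (hT' : T' ∈ 𝒮.CT)
    (hle : ∀ d ∈ 𝒮.D c T', ∀ᵐ ω ∂𝒮.P d, S d ω ≤ T' d ω)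
    (VS : Ω → EReal)
    (hVSmeas : Measurable[sigmaAtTime (𝒮.G c) (S c) (𝒮.hCT S hS c)] VS)
    (hVS : IsEssSup (𝒮.P c) (fun d : 𝒮.D c S => Jc (↑d) S) VS)
    (VT : Ω → EReal)
    (hVTmeas : Measurable[sigmaAtTime (𝒮.G c) (T' c) (𝒮.hCT T' hT' c)] VT)
    (hVT : IsEssSup (𝒮.P c) (fun d : 𝒮.D c T' => Jc (↑d) T') VT)
    (Y : Ω → EReal)
    (hY : IsCondExp (sigmaAtTime (𝒮.G c) (S c) (𝒮.hCT S hS c)) (𝒮.P c) VT Y)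
    (a b : ℝ) (hab : a < b) :
    𝒮.P c (({ω | VS ω < (a : EReal)} ∩ {ω | (b : EReal) < Y ω}) ∩
      {ω | ¬ T' c ω < S c ω}) = 0 := by
  classical
  obtain ⟨Dset, hDc, hDd⟩ := exists_countable_dense_timeset hT
  haveI : MeasureTheory.IsProbabilityMeasure (𝒮.P c) := 𝒮.hP c
  set B : Set Ω := ({ω | VS ω < (a : EReal)} ∩ {ω | (b : EReal) < Y ω}) ∩
      {ω | ¬ T' c ω < S c ω} with hBdef
  have hA0 : MeasurableSet[sigmaAtTime (𝒮.G c) (S c) (𝒮.hCT S hS c)]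
      ({ω | VS ω < (a : EReal)} ∩ {ω | (b : EReal) < Y ω}) :=
    (hVSmeas measurableSet_Iio).inter (hY.1 measurableSet_Ioi)
  have hBS : MeasurableSet[sigmaAtTime (𝒮.G c) (S c) (𝒮.hCT S hS c)] B :=
    hA0.inter (le_event_mem_sigma (𝒮.hGmono c) (𝒮.hCT S hS c) (𝒮.hCT T' hT' c) hDc hDd)
  have hBT : MeasurableSet[sigmaAtTime (𝒮.G c) (T' c) (𝒮.hCT T' hT' c)] B :=
    mem_tau_of_mem_sigma (𝒮.hGmono c) (𝒮.hCT S hS c) (𝒮.hCT T' hT' c) hDc hDd hA0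
  have hBm : MeasurableSet[𝒮.m] B := ccs_sigma_le 𝒮 c S hS _ hBS
  have hμB : 𝒮.P c B ≠ ⊤ := MeasureTheory.measure_ne_top _ _
  set p : ℝ := (𝒮.P c B).toReal with hpdef
  have hDsub : 𝒮.D c T' ⊆ 𝒮.D c S := 𝒮.hD_mono S hS T' hT' c hle
  have hres_univ : ((𝒮.P c).restrict B) Set.univ = 𝒮.P c B :=
    MeasureTheory.Measure.restrict_apply_univ B
  have hres_fin : ((𝒮.P c).restrict B) Set.univ ≠ ⊤ := by rw [hres_univ]; exact hμB
  have hres_le1 : ((𝒮.P c).restrict B) Set.univ ≤ 1 := by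
    rw [hres_univ]; exact MeasureTheory.prob_le_one
  have hconstint : ∀ x : ℝ,
      eInt ((𝒮.P c).restrict B) (fun _ => (x : EReal)) = ((x * p : ℝ) : EReal) := by
    intro x
    rw [eInt_const x hres_fin, hres_univ]
  have hconstneg : ∀ x : ℝ,
      (∫⁻ ω in B, eneg ((x : EReal)) ∂(𝒮.P c)) ≠ ⊤ := by
    intro x
    rw [eneg_coe, MeasureTheory.lintegral_const]
    exact ENNReal.mul_ne_top ENNReal.ofReal_ne_top hres_fin
  -- measurability of the conditional payoffs
  have hJmeas : ∀ e : C, Measurable[𝒮.m] (Jc e T') := fun e =>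
    ((hJc e T' hT').1).mono (ccs_sigma_le 𝒮 e T' hT') le_rfl
  -- the per-control bound
  have keyJ : ∀ e, e ∈ 𝒮.D c T' →
      eInt ((𝒮.P c).restrict B) (Jc e T') ≤ ((a * p : ℝ) : EReal) ∧
      (∫⁻ ω in B, eneg (Jc e T' ω) ∂(𝒮.P c)) ≠ ⊤ := by
    intro e he
    obtain ⟨htower, hnegT, hnegS⟩ :=
      tower_bound 𝒮 Jc hJc c S T' hS hT' e he (hDsub he) hBS hBT
    have haeles : ∀ᵐ ω ∂((𝒮.P c).restrict B), Jc e S ω ≤ (a : EReal) := by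
      have h1 : ∀ᵐ ω ∂((𝒮.P c).restrict B), Jc e S ω ≤ VS ω :=
        MeasureTheory.ae_restrict_of_ae (hVS.1 ⟨e, hDsub he⟩)
      have h2 : ∀ᵐ ω ∂((𝒮.P c).restrict B), ω ∈ B := MeasureTheory.ae_restrict_mem hBm
      filter_upwards [h1, h2] with ω hω1 hω2
      exact hω1.trans (le_of_lt hω2.1.1)
    refine ⟨htower.trans_le (le_trans (eInt_mono haeles hnegS (hconstneg a))
      (le_of_eq (hconstint a))), hnegT⟩
  -- negative parts of V(c,T') and of Y over B are integrable
  have negVT : (∫⁻ ω in B, eneg (VT ω) ∂(𝒮.P c)) ≠ ⊤ := by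
    refine ne_top_of_le_ne_top (keyJ c (𝒮.hD_self c T' hT')).2
      (MeasureTheory.lintegral_mono_ae ?_)
    have h1 : ∀ᵐ ω ∂((𝒮.P c).restrict B), Jc c T' ω ≤ VT ω :=
      MeasureTheory.ae_restrict_of_ae (hVT.1 ⟨c, 𝒮.hD_self c T' hT'⟩)
    exact h1.mono fun ω hω => antitone_eneg hω
  have negY : (∫⁻ ω in B, eneg (Y ω) ∂(𝒮.P c)) ≠ ⊤ := by
    refine ne_top_of_le_ne_top (hconstneg b) (MeasureTheory.lintegral_mono_ae ?_)
    have h2 : ∀ᵐ ω ∂((𝒮.P c).restrict B), ω ∈ B := MeasureTheory.ae_restrict_mem hBm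
    exact h2.mono fun ω hω => antitone_eneg (le_of_lt hω.1.2)
  -- conditional expectation identity on B
  have hYVT : eInt ((𝒮.P c).restrict B) Y = eInt ((𝒮.P c).restrict B) VT :=
    ereal_sub_eq_sub negY negVT (hY.2 B hBS)
  -- lower bound
  have hblow : ((b * p : ℝ) : EReal) ≤ eInt ((𝒮.P c).restrict B) Y := by
    rw [← hconstint b]
    refine eInt_mono ?_ (hconstneg b) negY
    have h2 : ∀ᵐ ω ∂((𝒮.P c).restrict B), ω ∈ B := MeasureTheory.ae_restrict_mem hBm
    exact h2.mono fun ω hω => le_of_lt hω.1.2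
  -- MAIN LATTICE BOUND
  haveI : Nonempty {d // d ∈ 𝒮.D c T'} := ⟨⟨c, 𝒮.hD_self c T' hT'⟩⟩
  have main2 : ∀ M : ℝ, 0 < M → ∀ ε : ℝ, 0 < ε →
      eInt ((𝒮.P c).restrict B) (fun ω => min (M : EReal) (VT ω)) ≤
        ((a * p + 2 * ε : ℝ) : EReal) := by
    intro M hM ε hε
    set f : {d // d ∈ 𝒮.D c T'} → Ω → EReal :=
      fun i ω => min (M : EReal) (Jc i.1 T' ω) with hfdef
    have hfm : ∀ i, Measurable[𝒮.m] (f i) := fun i => measurable_const.min (hJmeas i.1)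
    obtain ⟨d, hd⟩ := exists_countable_approx (𝒮.P c) f hfm
    set U : Ω → EReal := fun ω => ⨆ n, f (d n) ω with hUdef
    set r : ℕ → Ω → EReal := fun n ω => ⨆ k : Fin (n + 1), f (d k.1) ω with hrdef
    have hUr : ∀ ω, U ω = ⨆ n, r n ω := by
      intro ω
      refine le_antisymm (iSup_le fun n => ?_) (iSup_le fun n => iSup_le fun k => ?_)
      · exact le_iSup_of_le n (le_iSup_of_le (⟨n, n.lt_succ_self⟩ : Fin (n + 1)) le_rfl)
      · exact le_iSup (fun n => f (d n) ω) k.1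
    have hrmono : ∀ ω, Monotone fun n => r n ω := by
      intro ω n m h
      exact iSup_le fun k => le_iSup_of_le ⟨k.1, lt_of_lt_of_le k.2 (Nat.succ_le_succ h)⟩ le_rfl
    have hrmeas : ∀ n, Measurable[𝒮.m] (r n) :=
      fun n => Measurable.iSup fun k => hfm (d k.1)
    have hrM : ∀ n ω, r n ω ≤ (M : EReal) :=
      fun n ω => iSup_le fun k => min_le_left _ _
    have hr0 : ∀ ω, r 0 ω = f (d 0) ω := by
      intro ω
      refine le_antisymm (iSup_le fun k => ?_) (le_iSup (fun k : Fin 1 => f (d k.1) ω) 0)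
      have hk : (k : ℕ) = 0 := Nat.lt_one_iff.1 k.2
      rw [hk]
    have hrsucc : ∀ n ω, r (n + 1) ω = max (r n ω) (f (d (n + 1)) ω) := by
      intro n ω
      refine le_antisymm (iSup_le fun k => ?_) (max_le (iSup_le fun k => ?_) ?_)
      · rcases lt_or_eq_of_le (Nat.lt_succ_iff.1 k.2) with h | h
        · exact le_max_of_le_left (le_iSup_of_le ⟨k.1, h⟩ le_rfl)
        · rw [show f (d k.1) ω = f (d (n + 1)) ω by rw [h]]
          exact le_max_right _ _
      · exact le_iSup_of_le ⟨k.1, lt_of_lt_of_le k.2 (Nat.le_succ _)⟩ le_rfl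
      · exact le_iSup_of_le (⟨n + 1, Nat.lt_succ_self _⟩ : Fin (n + 2)) le_rfl
    -- U dominates the truncated Bellman function a.e.
    have hUVT : ∀ᵐ ω ∂(𝒮.P c), min (M : EReal) (VT ω) ≤ U ω := by
      set W : Ω → EReal := fun ω => if U ω < (M : EReal) then U ω else ⊤ with hWdef
      have hJW : ∀ i : {d // d ∈ 𝒮.D c T'}, ∀ᵐ ω ∂(𝒮.P c), Jc i.1 T' ω ≤ W ω := by
        intro i
        filter_upwards [hd i] with ω hω
        by_cases hc : U ω < (M : EReal)
        · have h1 : min (M : EReal) (Jc i.1 T' ω) < (M : EReal) := lt_of_le_of_lt hω hc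
          have h2 : Jc i.1 T' ω < (M : EReal) := by
            by_contra h3
            push_neg at h3
            rw [min_eq_left h3] at h1
            exact absurd h1 (lt_irrefl _)
          calc Jc i.1 T' ω = min (M : EReal) (Jc i.1 T' ω) := (min_eq_right h2.le).symm
            _ ≤ U ω := hω
            _ = W ω := by rw [hWdef]; simp only [if_pos hc]
        · rw [hWdef]; simp only [if_neg hc]; exact le_top
      have hVTW := hVT.2 W hJW
      filter_upwards [hVTW] with ω hω
      by_cases hc : U ω < (M : EReal)
      · have hWU : W ω = U ω := by rw [hWdef]; simp only [if_pos hc]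
        rw [hWU] at hω
        exact le_trans (min_le_min le_rfl hω) (min_le_right _ _)
      · exact le_trans (min_le_left _ _) (not_lt.1 hc)
    -- the lattice chain
    set δ : ℕ → ℝ := fun n => ε - ε / 2 ^ n with hδdef
    have hδ0 : δ 0 = 0 := by simp [hδdef]
    have hδnonneg : ∀ n, 0 ≤ δ n := by
      intro n
      have h1 : (1:ℝ) ≤ 2 ^ n := one_le_pow₀ (by norm_num)
      have : ε / 2 ^ n ≤ ε := div_le_self hε.le h1
      simp only [hδdef]
      linarith
    have hδle : ∀ n, δ n ≤ ε := fun n => sub_le_self ε (by positivity)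
    have chain : ∀ n, ∃ e, ∃ _ : e ∈ 𝒮.D c T',
        ∀ᵐ ω ∂(𝒮.P c), r n ω ≤ Jc e T' ω + ((δ n : ℝ) : EReal) := by
      intro n
      induction n with
      | zero =>
        refine ⟨(d 0).1, (d 0).2, Filter.Eventually.of_forall fun ω => ?_⟩
        rw [hr0 ω, hδ0]
        calc f (d 0) ω ≤ Jc (d 0).1 T' ω := min_le_right _ _
          _ ≤ Jc (d 0).1 T' ω + ((0 : ℝ) : EReal) :=
            le_add_of_nonneg_right (by norm_num)
      | succ n ih =>
        obtain ⟨e, he, hae⟩ := ih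
        obtain ⟨e', he', hae'⟩ :=
          hlat c T' hT' (ε / 2 ^ (n + 1)) (by positivity) M hM e he (d (n + 1)).1 (d (n + 1)).2
        refine ⟨e', he', ?_⟩
        filter_upwards [hae, hae'] with ω h1 h2
        have h2' : max (min (M : EReal) (Jc e T' ω)) (min (M : EReal) (Jc (d (n + 1)).1 T' ω))
            ≤ Jc e' T' ω + ((ε / 2 ^ (n + 1) : ℝ) : EReal) := by
          have h3 := (EReal.sub_le_iff_le_add (Or.inl (EReal.coe_ne_bot _))
            (Or.inl (EReal.coe_ne_top _))).1 h2
          simpa using h3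
        calc r (n + 1) ω = max (r n ω) (f (d (n + 1)) ω) := hrsucc n ω
          _ ≤ max (min (M : EReal) (Jc e T' ω) + ((δ n : ℝ) : EReal))
              (min (M : EReal) (Jc (d (n + 1)).1 T' ω)) := by
              refine max_le_max ?_ le_rfl
              exact (le_min (hrM n ω) h1).trans (ereal_min_add_le _ _ (hδnonneg n))
          _ ≤ max (min (M : EReal) (Jc e T' ω)) (min (M : EReal) (Jc (d (n + 1)).1 T' ω))
              + ((δ n : ℝ) : EReal) := ereal_max_add_le _ _ (hδnonneg n)
          _ ≤ (Jc e' T' ω + ((ε / 2 ^ (n + 1) : ℝ) : EReal)) + ((δ n : ℝ) : EReal) :=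
              add_le_add_left h2' _
          _ = Jc e' T' ω + ((δ (n + 1) : ℝ) : EReal) := by
              rw [add_assoc, ← EReal.coe_add]
              congr 1
              rw [EReal.coe_eq_coe_iff]
              simp only [hδdef]
              field_simp
              ring
    choose E hE hEa using chain
    -- per-n integrability and bound
    have negr : ∀ n, (∫⁻ ω in B, eneg (r n ω) ∂(𝒮.P c)) ≠ ⊤ := by
      intro n
      refine ne_top_of_le_ne_top (keyJ (d 0).1 (d 0).2).2
        (MeasureTheory.lintegral_mono fun ω => ?_)
      calc eneg (r n ω) ≤ eneg (r 0 ω) := antitone_eneg (hrmono ω (Nat.zero_le n))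
        _ = eneg (Jc (d 0).1 T' ω) := by rw [hr0 ω]; exact eneg_min hM.le _
    have Rn : ∀ n, eInt ((𝒮.P c).restrict B) (r n) ≤ ((a * p + 2 * ε : ℝ) : EReal) := by
      intro n
      have negJE : (∫⁻ ω in B, eneg (Jc (E n) T' ω) ∂(𝒮.P c)) ≠ ⊤ := (keyJ (E n) (hE n)).2
      have negJEδ : (∫⁻ ω in B, eneg (Jc (E n) T' ω + ((δ n : ℝ) : EReal)) ∂(𝒮.P c)) ≠ ⊤ :=
        ne_top_of_le_ne_top negJE (MeasureTheory.lintegral_mono fun ω =>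
          antitone_eneg (le_add_of_nonneg_right (by exact_mod_cast hδnonneg n)))
      calc eInt ((𝒮.P c).restrict B) (r n)
          ≤ eInt ((𝒮.P c).restrict B) (fun ω => Jc (E n) T' ω + ((δ n : ℝ) : EReal)) :=
            eInt_mono (MeasureTheory.ae_restrict_of_ae (hEa n)) (negr n) negJEδ
        _ ≤ eInt ((𝒮.P c).restrict B) (Jc (E n) T') + ((2 * δ n : ℝ) : EReal) :=
            eInt_add_const_le (hδnonneg n) hres_le1
              (measurable_epos.comp (hJmeas (E n))) negJE
        _ ≤ ((a * p : ℝ) : EReal) + ((2 * δ n : ℝ) : EReal) :=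
            add_le_add_left (keyJ (E n) (hE n)).1 _
        _ ≤ ((a * p + 2 * ε : ℝ) : EReal) := by
            rw [← EReal.coe_add]
            exact EReal.coe_le_coe_iff.2 (by nlinarith [hδle n])
    -- monotone limits
    have hPsup : (∫⁻ ω in B, epos (U ω) ∂(𝒮.P c)) =
        ⨆ n, ∫⁻ ω in B, epos (r n ω) ∂(𝒮.P c) := by
      have hpt : ∀ ω, epos (U ω) = ⨆ n, epos (r n ω) := fun ω => by
        rw [hUr ω]; exact epos_iSup _
      rw [MeasureTheory.lintegral_congr hpt]
      exact MeasureTheory.lintegral_iSup (fun n => measurable_epos.comp (hrmeas n))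
        (fun n m h ω => monotone_epos (hrmono ω h))
    have hNinf : (∫⁻ ω in B, eneg (U ω) ∂(𝒮.P c)) =
        ⨅ n, ∫⁻ ω in B, eneg (r n ω) ∂(𝒮.P c) := by
      have hpt : ∀ ω, eneg (U ω) = ⨅ n, eneg (r n ω) := by
        intro ω
        show epos (-(U ω)) = ⨅ n, epos (-(r n ω))
        rw [hUr ω, ereal_neg_iSup]
        exact epos_iInf_antitone _ fun n m h => EReal.neg_le_neg_iff.2 (hrmono ω h)
      rw [MeasureTheory.lintegral_congr hpt]
      letI : MeasurableSpace Ω := 𝒮.m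
      exact MeasureTheory.lintegral_iInf (fun n => measurable_eneg.comp (hrmeas n))
        (fun n m h ω => antitone_eneg (hrmono ω h)) (negr 0)
    have hNU : (∫⁻ ω in B, eneg (U ω) ∂(𝒮.P c)) ≠ ⊤ := by
      rw [hNinf]
      exact ne_top_of_le_ne_top (negr 0) (iInf_le _ 0)
    -- per-n bound with the limiting negative part
    have hstep : ∀ η : ℝ, 0 < η → ∀ n,
        ((∫⁻ ω in B, epos (r n ω) ∂(𝒮.P c) : ENNReal) : EReal) -
          ((∫⁻ ω in B, eneg (U ω) ∂(𝒮.P c) : ENNReal) : EReal) ≤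
        ((a * p + 2 * ε + η : ℝ) : EReal) := by
      intro η hη n
      have h1 : (∫⁻ ω in B, eneg (U ω) ∂(𝒮.P c)) <
          (∫⁻ ω in B, eneg (U ω) ∂(𝒮.P c)) + ENNReal.ofReal η :=
        ENNReal.lt_add_right hNU (ENNReal.ofReal_pos.2 hη).ne'
      have h1' : (⨅ m, ∫⁻ ω in B, eneg (r m ω) ∂(𝒮.P c)) <
          (∫⁻ ω in B, eneg (U ω) ∂(𝒮.P c)) + ENNReal.ofReal η := by
        rw [← hNinf]; exact h1
      obtain ⟨m0, hm0⟩ := iInf_lt_iff.1 h1'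
      have hxX : (∫⁻ ω in B, epos (r n ω) ∂(𝒮.P c)) ≤
          ∫⁻ ω in B, epos (r (max m0 n) ω) ∂(𝒮.P c) :=
        MeasureTheory.lintegral_mono fun ω => monotone_epos (hrmono ω (le_max_right m0 n))
      have hnM : (∫⁻ ω in B, eneg (r (max m0 n) ω) ∂(𝒮.P c)) ≤
          (∫⁻ ω in B, eneg (U ω) ∂(𝒮.P c)) + ENNReal.ofReal η := by
        refine le_trans (MeasureTheory.lintegral_mono fun ω =>
          antitone_eneg (hrmono ω (le_max_left m0 n))) hm0.le
      exact enn_sub_le_of hNU (negr (max m0 n)) hxX hnM hη.le (Rn (max m0 n))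
    -- conclude the bound for U, then for min M VT
    have hUbound : eInt ((𝒮.P c).restrict B) U ≤ ((a * p + 2 * ε : ℝ) : EReal) := by
      refine ereal_le_of_forall_add fun η hη => ?_
      have h2 := enn_iSup_sub_le (fun n => ∫⁻ ω in B, epos (r n ω) ∂(𝒮.P c))
        _ hNU _ (hstep η hη)
      show ((∫⁻ ω, epos (U ω) ∂((𝒮.P c).restrict B) : ENNReal) : EReal) -
        ((∫⁻ ω, eneg (U ω) ∂((𝒮.P c).restrict B) : ENNReal) : EReal) ≤ _
      rw [show (∫⁻ ω, epos (U ω) ∂((𝒮.P c).restrict B)) = ∫⁻ ω in B, epos (U ω) ∂(𝒮.P c)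
        from rfl, hPsup]
      exact h2
    have hminUae : ∀ᵐ ω ∂((𝒮.P c).restrict B), min (M : EReal) (VT ω) ≤ U ω :=
      MeasureTheory.ae_restrict_of_ae hUVT
    refine le_trans ?_ hUbound
    refine EReal.sub_le_sub ?_ ?_
    · exact EReal.coe_ennreal_le_coe_ennreal_iff.2
        (MeasureTheory.lintegral_mono_ae (hminUae.mono fun ω h => monotone_epos h))
    · exact EReal.coe_ennreal_le_coe_ennreal_iff.2
        (MeasureTheory.lintegral_mono_ae (hminUae.mono fun ω h => antitone_eneg h))
  -- eliminate the truncation and the ε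
  have hVTle : eInt ((𝒮.P c).restrict B) VT ≤ ((a * p : ℝ) : EReal) := by
    refine ereal_le_of_forall_add fun ε hε => ?_
    have hnegmin : ∀ M : ℝ, 0 < M →
        (∫⁻ ω in B, eneg (min (M : EReal) (VT ω)) ∂(𝒮.P c)) =
          ∫⁻ ω in B, eneg (VT ω) ∂(𝒮.P c) :=
      fun M hM => MeasureTheory.lintegral_congr fun ω => by rw [eneg_min hM.le]
    have hVTm : Measurable[𝒮.m] VT := hVTmeas.mono (ccs_sigma_le 𝒮 c T' hT') le_rfl
    have hPsup : (∫⁻ ω in B, epos (VT ω) ∂(𝒮.P c)) =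
        ⨆ n : ℕ, ∫⁻ ω in B, epos (min (((n : ℝ) + 1 : ℝ) : EReal) (VT ω)) ∂(𝒮.P c) := by
      have hpt : ∀ ω, epos (VT ω) =
          ⨆ n : ℕ, epos (min (((n : ℝ) + 1 : ℝ) : EReal) (VT ω)) := by
        intro ω
        conv_lhs => rw [← ereal_iSup_min_natCast (VT ω)]
        exact epos_iSup _
      rw [MeasureTheory.lintegral_congr hpt]
      refine MeasureTheory.lintegral_iSup
        (fun n => measurable_epos.comp (measurable_const.min hVTm)) ?_
      intro n m h ω
      refine monotone_epos (min_le_min ?_ le_rfl)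
      refine EReal.coe_le_coe_iff.2 ?_
      have hcast : (n : ℝ) ≤ (m : ℝ) := Nat.cast_le.2 h
      linarith
    have hpern : ∀ n : ℕ,
        ((∫⁻ ω in B, epos (min (((n : ℝ) + 1 : ℝ) : EReal) (VT ω)) ∂(𝒮.P c) : ENNReal) : EReal) -
          ((∫⁻ ω in B, eneg (VT ω) ∂(𝒮.P c) : ENNReal) : EReal) ≤
        ((a * p + ε : ℝ) : EReal) := by
      intro n
      have h1 := main2 ((n : ℝ) + 1) (by positivity) (ε / 2) (by positivity)
      rw [show a * p + 2 * (ε / 2) = a * p + ε by ring] at h1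
      have h2 : eInt ((𝒮.P c).restrict B)
          (fun ω => min (((n : ℝ) + 1 : ℝ) : EReal) (VT ω)) =
          ((∫⁻ ω in B, epos (min (((n : ℝ) + 1 : ℝ) : EReal) (VT ω)) ∂(𝒮.P c) : ENNReal) : EReal) -
          ((∫⁻ ω in B, eneg (VT ω) ∂(𝒮.P c) : ENNReal) : EReal) := by
        rw [eInt, hnegmin ((n : ℝ) + 1) (by positivity)]
      rw [h2] at h1
      exact h1
    have h3 := enn_iSup_sub_le
      (fun n : ℕ => ∫⁻ ω in B, epos (min (((n : ℝ) + 1 : ℝ) : EReal) (VT ω)) ∂(𝒮.P c))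
      _ negVT _ hpern
    show ((∫⁻ ω, epos (VT ω) ∂((𝒮.P c).restrict B) : ENNReal) : EReal) -
      ((∫⁻ ω, eneg (VT ω) ∂((𝒮.P c).restrict B) : ENNReal) : EReal) ≤ _
    rw [show (∫⁻ ω, epos (VT ω) ∂((𝒮.P c).restrict B)) = ∫⁻ ω in B, epos (VT ω) ∂(𝒮.P c)
      from rfl, hPsup]
    exact h3
  -- conclude
  have hfinal : ((b * p : ℝ) : EReal) ≤ ((a * p : ℝ) : EReal) := by
    calc ((b * p : ℝ) : EReal) ≤ eInt ((𝒮.P c).restrict B) Y := hblow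
      _ = eInt ((𝒮.P c).restrict B) VT := hYVT
      _ ≤ ((a * p : ℝ) : EReal) := hVTle
  have hreal : b * p ≤ a * p := EReal.coe_le_coe_iff.1 hfinal
  have hpnn : 0 ≤ p := ENNReal.toReal_nonneg
  have hp0 : p = 0 := le_antisymm (by nlinarith) hpnn
  rcases (ENNReal.toReal_eq_zero_iff _).1 hp0 with h | h
  · exact h
  · exact absurd h hμB

end KeyLemma
/-- **Bellman's principle (B1): the Bellman system is a supermartingale system.** In a
coherent stochastic control system with the weak upwards lattice property and with the
constant times `0` and `∞` in `𝔊`, for all `S, T' ∈ 𝔊` and controls `c` with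
`S^d ≤ T'^d` `P^d`-a.s. for all `d ∈ D(c,T')`, one has
`E^{P^c}[V(c,T') | G^c_{S^c}] ≤ V(c,S)` `P^c`-a.s. -/
theorem stmt_17 [LinearOrder T] [OrderBot T]
    (hT : Nonempty (T ≃o ℕ) ∨ Nonempty (T ≃o NNReal))
    (𝒮 : CCS Ω C T)
    (hbot : (fun (_ : C) (_ : Ω) => ((⊥ : T) : WithTop T)) ∈ 𝒮.CT)
    (htop : (fun (_ : C) (_ : Ω) => (⊤ : WithTop T)) ∈ 𝒮.CT)
    -- the conditional payoff system `J(d, S) = E^{P^d}[J(d) | G^d_{S^d}]`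
    (Jc : C → (C → Ω → WithTop T) → Ω → EReal)
    (hJc : ∀ d, ∀ S, ∀ hS : S ∈ 𝒮.CT,
      IsCondExp (sigmaAtTime (𝒮.G d) (S d) (𝒮.hCT S hS d)) (𝒮.P d) (𝒮.J d) (Jc d S))
    -- the weak upwards lattice property
    (hlat : ∀ c, ∀ S ∈ 𝒮.CT, ∀ ε : ℝ, 0 < ε → ∀ M : ℝ, 0 < M →
      ∀ d ∈ 𝒮.D c S, ∀ d' ∈ 𝒮.D c S, ∃ d'' ∈ 𝒮.D c S,
        ∀ᵐ ω ∂𝒮.P c,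
          ((M : EReal) ⊓ Jc d S ω) ⊔ ((M : EReal) ⊓ Jc d' S ω) - (ε : EReal) ≤ Jc d'' S ω)
    (c : C) (S T' : C → Ω → WithTop T) (hS : S ∈ 𝒮.CT) (hT' : T' ∈ 𝒮.CT)
    (hle : ∀ d ∈ 𝒮.D c T', ∀ᵐ ω ∂𝒮.P d, S d ω ≤ T' d ω)
    -- `VS = V(c, S)`, the Bellman system at `(c, S)`
    (VS : Ω → EReal)
    (hVSmeas : Measurable[sigmaAtTime (𝒮.G c) (S c) (𝒮.hCT S hS c)] VS)
    (hVS : IsEssSup (𝒮.P c) (fun d : 𝒮.D c S => Jc (↑d) S) VS)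
    -- `VT = V(c, T')`, the Bellman system at `(c, T')`
    (VT : Ω → EReal)
    (hVTmeas : Measurable[sigmaAtTime (𝒮.G c) (T' c) (𝒮.hCT T' hT' c)] VT)
    (hVT : IsEssSup (𝒮.P c) (fun d : 𝒮.D c T' => Jc (↑d) T') VT)
    -- `Y = E^{P^c}[V(c,T') | G^c_{S^c}]`
    (Y : Ω → EReal)
    (hY : IsCondExp (sigmaAtTime (𝒮.G c) (S c) (𝒮.hCT S hS c)) (𝒮.P c) VT Y) :
    ∀ᵐ ω ∂𝒮.P c, Y ω ≤ VS ω := by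
  classical
  haveI : MeasureTheory.IsProbabilityMeasure (𝒮.P c) := 𝒮.hP c
  set E : ℚ × ℚ → Set Ω := fun pq =>
    if ((pq.1 : ℝ) < (pq.2 : ℝ)) then
      (({ω | VS ω < ((pq.1 : ℝ) : EReal)} ∩ {ω | ((pq.2 : ℝ) : EReal) < Y ω}) ∩
        {ω | ¬ T' c ω < S c ω})
    else ∅ with hEdef
  have hEnull : ∀ pq : ℚ × ℚ, 𝒮.P c (E pq) = 0 := by
    intro pq
    rw [hEdef]
    by_cases h : ((pq.1 : ℝ) < (pq.2 : ℝ))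
    · simp only [if_pos h]
      exact key_zero hT 𝒮 Jc hJc hlat c S T' hS hT' hle VS hVSmeas hVS VT hVTmeas hVT Y hY
        (pq.1 : ℝ) (pq.2 : ℝ) h
    · simp only [if_neg h]
      exact MeasureTheory.measure_empty
  have hKnull : 𝒮.P c {ω | T' c ω < S c ω} = 0 := by
    have h := hle c (𝒮.hD_self c T' hT')
    rw [MeasureTheory.ae_iff] at h
    convert h using 2
    ext ω
    simp only [Set.mem_setOf_eq, not_le]
  rw [MeasureTheory.ae_iff]
  have hsub : {ω | ¬ Y ω ≤ VS ω} ⊆ {ω | T' c ω < S c ω} ∪ ⋃ pq : ℚ × ℚ, E pq := by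
    intro ω hω
    simp only [Set.mem_setOf_eq, not_le] at hω
    by_cases hK : T' c ω < S c ω
    · exact Or.inl hK
    · obtain ⟨q, hq1, hq2⟩ := EReal.exists_rat_btwn_of_lt hω
      obtain ⟨rr, hr1, hr2⟩ := EReal.exists_rat_btwn_of_lt hq2
      have hqr : (q : ℝ) < (rr : ℝ) := by exact_mod_cast hr1
      refine Or.inr (Set.mem_iUnion.2 ⟨(q, rr), ?_⟩)
      rw [hEdef]
      simp only [if_pos hqr]
      exact ⟨⟨hq1, hr2⟩, hK⟩
  refine le_antisymm ?_ zero_le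
  calc 𝒮.P c {ω | ¬ Y ω ≤ VS ω} ≤ 𝒮.P c ({ω | T' c ω < S c ω} ∪ ⋃ pq : ℚ × ℚ, E pq) :=
      MeasureTheory.measure_mono hsub
    _ ≤ 𝒮.P c {ω | T' c ω < S c ω} + 𝒮.P c (⋃ pq : ℚ × ℚ, E pq) :=
      MeasureTheory.measure_union_le _ _
    _ = 0 := by
      rw [hKnull, MeasureTheory.measure_iUnion_null hEnull]
      simp
end ErealSubHelpers
end
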